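/- arXiv:2102.01179 — 16 statements merged into one kernel-verified Lean document; each statement's English description precedes it below -/
import Mathlib

section
/- Let R be a ring, M a right R-module, L₁ and L₂ lattices, and φ an order (lattice) isomorphism from the lattice of submodules of M onto the product lattice L₁ × L₂. Define M₁ := φ⁻¹((φ ⊤).1, (φ ⊥).2) and M₂ := φ⁻¹((φ ⊥).1, (φ ⊤).2). Then M₁ ⊓ M₂ = ⊥ and M₁ ⊔ M₂ = ⊤ (so M is the internal direct sum of M₁ and M₂), both M₁ and M₂ are distributive submodules of M, and the map X ↦ (X ⊓ M₁, X ⊓ M₂) is an order isomorphism from the lattice of submodules of M onto the product of the lattices of submodules of M₁ and of M₂. -/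
/-- A submodule `N ⊆ M` is distributive if the sublattice of `𝓛(M)` generated by `N` and any
two submodules is distributive. -/
def IsDistribSubmodule {R M : Type*} [Ring R] [AddCommGroup M] [Module R M]
    (N : Submodule R M) : Prop :=
  ∀ Y₁ Y₂ : Submodule R M, N ⊔ (Y₁ ⊓ Y₂) = (N ⊔ Y₁) ⊓ (N ⊔ Y₂)

/-- If the lattice of submodules of a right `R`-module `M` is a product of two lattices
`L₁ × L₂`, then `M = M₁ ⊕ M₂` where `M₁, M₂` are the distributive submodules corresponding to
`((φ ⊤).1, (φ ⊥).2)` and `((φ ⊥).1, (φ ⊤).2)`, and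
`𝓛(M) ≅ 𝓛(M₁) × 𝓛(M₂)` via `X ↦ (X ⊓ M₁, X ⊓ M₂)`. -/
theorem lattice_decomposition_of_prod {R M : Type*} [Ring R] [AddCommGroup M]
    [Module Rᵐᵒᵖ M] {L₁ L₂ : Type*} [Lattice L₁] [Lattice L₂]
    (φ : Submodule Rᵐᵒᵖ M ≃o L₁ × L₂)
    (M₁ : Submodule Rᵐᵒᵖ M) (hM₁ : M₁ = φ.symm ((φ ⊤).1, (φ ⊥).2))
    (M₂ : Submodule Rᵐᵒᵖ M) (hM₂ : M₂ = φ.symm ((φ ⊥).1, (φ ⊤).2)) :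
    M₁ ⊓ M₂ = ⊥ ∧ M₁ ⊔ M₂ = ⊤ ∧
    IsDistribSubmodule M₁ ∧ IsDistribSubmodule M₂ ∧
    ∃ ψ : Submodule Rᵐᵒᵖ M ≃o Submodule Rᵐᵒᵖ M₁ × Submodule Rᵐᵒᵖ M₂,
      ∀ X : Submodule Rᵐᵒᵖ M,
        ψ X = (Submodule.comap M₁.subtype (X ⊓ M₁), Submodule.comap M₂.subtype (X ⊓ M₂)) := by
  -- φ ⊤ is the greatest element and φ ⊥ the least element of L₁ × L₂
  have htop : ∀ p : L₁ × L₂, p ≤ φ ⊤ := fun p => by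
    have := φ.monotone (le_top : φ.symm p ≤ ⊤)
    rwa [φ.apply_symm_apply] at this
  have hbot : ∀ p : L₁ × L₂, φ ⊥ ≤ p := fun p => by
    have := φ.monotone (bot_le : ⊥ ≤ φ.symm p)
    rwa [φ.apply_symm_apply] at this
  have ht1 : ∀ a : L₁, a ≤ (φ ⊤).1 := fun a => (htop (a, (φ ⊤).2)).1
  have ht2 : ∀ a : L₂, a ≤ (φ ⊤).2 := fun a => (htop ((φ ⊤).1, a)).2
  have hb1 : ∀ a : L₁, (φ ⊥).1 ≤ a := fun a => (hbot (a, (φ ⊥).2)).1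
  have hb2 : ∀ a : L₂, (φ ⊥).2 ≤ a := fun a => (hbot ((φ ⊥).1, a)).2
  have hφM₁ : φ M₁ = ((φ ⊤).1, (φ ⊥).2) := by rw [hM₁, φ.apply_symm_apply]
  have hφM₂ : φ M₂ = ((φ ⊥).1, (φ ⊤).2) := by rw [hM₂, φ.apply_symm_apply]
  -- key computations
  have hinf₁ : ∀ X : Submodule Rᵐᵒᵖ M, φ (X ⊓ M₁) = ((φ X).1, (φ ⊥).2) := fun X => by
    rw [φ.map_inf, hφM₁, Prod.inf_def]
    exact Prod.ext (inf_eq_left.2 (ht1 _)) (inf_eq_right.2 (hb2 _))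
  have hinf₂ : ∀ X : Submodule Rᵐᵒᵖ M, φ (X ⊓ M₂) = ((φ ⊥).1, (φ X).2) := fun X => by
    rw [φ.map_inf, hφM₂, Prod.inf_def]
    exact Prod.ext (inf_eq_right.2 (hb1 _)) (inf_eq_left.2 (ht2 _))
  have hrec : ∀ X : Submodule Rᵐᵒᵖ M, (X ⊓ M₁) ⊔ (X ⊓ M₂) = X := fun X => by
    apply φ.injective
    rw [φ.map_sup, hinf₁, hinf₂, Prod.sup_def]
    exact Prod.ext (sup_eq_left.2 (hb1 _)) (sup_eq_right.2 (hb2 _))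
  have h1 : M₁ ⊓ M₂ = ⊥ := by
    apply φ.injective
    rw [φ.map_inf, hφM₁, hφM₂, Prod.inf_def]
    refine Prod.ext ?_ ?_
    · exact inf_eq_right.2 (hb1 _)
    · exact inf_eq_left.2 (ht2 _)
  have h2 : M₁ ⊔ M₂ = ⊤ := by
    apply φ.injective
    rw [φ.map_sup, hφM₁, hφM₂, Prod.sup_def]
    exact Prod.ext (sup_eq_left.2 (hb1 _)) (sup_eq_right.2 (ht2 _))
  have h3 : IsDistribSubmodule M₁ := fun Y₁ Y₂ => by
    apply φ.injective
    rw [φ.map_inf, φ.map_sup, φ.map_sup, φ.map_sup, φ.map_inf, hφM₁,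
      Prod.sup_def, Prod.sup_def, Prod.sup_def, Prod.inf_def, Prod.inf_def]
    refine Prod.ext ?_ ?_ <;> simp only
    · rw [sup_eq_left.2 (ht1 _), sup_eq_left.2 (ht1 _), sup_eq_left.2 (ht1 _), inf_idem]
    · rw [sup_eq_right.2 (hb2 _), sup_eq_right.2 (hb2 _), sup_eq_right.2 (hb2 _)]
  have h4 : IsDistribSubmodule M₂ := fun Y₁ Y₂ => by
    apply φ.injective
    rw [φ.map_inf, φ.map_sup, φ.map_sup, φ.map_sup, φ.map_inf, hφM₂,
      Prod.sup_def, Prod.sup_def, Prod.sup_def, Prod.inf_def, Prod.inf_def]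
    refine Prod.ext ?_ ?_ <;> simp only
    · rw [sup_eq_right.2 (hb1 _), sup_eq_right.2 (hb1 _), sup_eq_right.2 (hb1 _)]
    · rw [sup_eq_left.2 (ht2 _), sup_eq_left.2 (ht2 _), sup_eq_left.2 (ht2 _), inf_idem]
  -- splitting lemma
  have hsplit₁ : ∀ Y Z : Submodule Rᵐᵒᵖ M, Y ≤ M₁ → Z ≤ M₂ → (Y ⊔ Z) ⊓ M₁ = Y := by
    intro Y Z hY hZ
    have hY2 : (φ Y).2 = (φ ⊥).2 :=
      le_antisymm (by simpa [hφM₁] using (φ.monotone hY).2) (hb2 _)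
    have hZ1 : (φ Z).1 = (φ ⊥).1 :=
      le_antisymm (by simpa [hφM₂] using (φ.monotone hZ).1) (hb1 _)
    apply φ.injective
    rw [hinf₁, φ.map_sup]
    refine Prod.ext ?_ hY2.symm
    show (φ Y ⊔ φ Z).1 = (φ Y).1
    rw [Prod.fst_sup, hZ1]
    exact sup_eq_left.2 (hb1 _)
  have hsplit₂ : ∀ Y Z : Submodule Rᵐᵒᵖ M, Y ≤ M₁ → Z ≤ M₂ → (Y ⊔ Z) ⊓ M₂ = Z := by
    intro Y Z hY hZ
    have hY2 : (φ Y).2 = (φ ⊥).2 :=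
      le_antisymm (by simpa [hφM₁] using (φ.monotone hY).2) (hb2 _)
    have hZ1 : (φ Z).1 = (φ ⊥).1 :=
      le_antisymm (by simpa [hφM₂] using (φ.monotone hZ).1) (hb1 _)
    apply φ.injective
    rw [hinf₂, φ.map_sup]
    refine Prod.ext hZ1.symm ?_
    show (φ Y ⊔ φ Z).2 = (φ Z).2
    rw [Prod.snd_sup, hY2]
    exact sup_eq_right.2 (hb2 _)
  refine ⟨h1, h2, h3, h4, ?_⟩
  refine ⟨{ toFun := fun X => (Submodule.comap M₁.subtype (X ⊓ M₁),
              Submodule.comap M₂.subtype (X ⊓ M₂)),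
            invFun := fun p => Submodule.map M₁.subtype p.1 ⊔ Submodule.map M₂.subtype p.2,
            left_inv := ?_, right_inv := ?_, map_rel_iff' := ?_ }, fun X => rfl⟩
  · intro X
    simp only [Submodule.map_comap_subtype]
    rw [inf_of_le_right inf_le_right, inf_of_le_right inf_le_right, hrec]
  · rintro ⟨A, B⟩
    have hA : Submodule.map M₁.subtype A ≤ M₁ := Submodule.map_subtype_le _ _
    have hB : Submodule.map M₂.subtype B ≤ M₂ := Submodule.map_subtype_le _ _
    simp only
    rw [hsplit₁ _ _ hA hB, hsplit₂ _ _ hA hB]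
    simp only [Submodule.comap_map_eq, Submodule.ker_subtype, sup_bot_eq]
  · intro X Y
    simp only [Equiv.coe_fn_mk, Prod.mk_le_mk]
    constructor
    · rintro ⟨hc1, hc2⟩
      have hm1 : X ⊓ M₁ ≤ Y ⊓ M₁ := by
        have := Submodule.map_mono (f := M₁.subtype) hc1
        rwa [Submodule.map_comap_subtype, Submodule.map_comap_subtype,
          inf_of_le_right inf_le_right, inf_of_le_right inf_le_right] at this
      have hm2 : X ⊓ M₂ ≤ Y ⊓ M₂ := by
        have := Submodule.map_mono (f := M₂.subtype) hc2
        rwa [Submodule.map_comap_subtype, Submodule.map_comap_subtype,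
          inf_of_le_right inf_le_right, inf_of_le_right inf_le_right] at this
      calc X = (X ⊓ M₁) ⊔ (X ⊓ M₂) := (hrec X).symm
        _ ≤ (Y ⊓ M₁) ⊔ (Y ⊓ M₂) := sup_le_sup hm1 hm2
        _ = Y := hrec Y
    · intro h
      exact ⟨Submodule.comap_mono (inf_le_inf_right _ h),
        Submodule.comap_mono (inf_le_inf_right _ h)⟩
end

section
/- Let R be a ring, M a right R-module, and N a submodule of M. Then N is a distributive submodule of M if and only if for every m ∈ M and every n ∈ N there exist a, b ∈ R with a + b = 1 such that m·a ∈ N and n·b lies in the cyclic submodule m·R generated by m (i.e., (N : m) + (mR : n) = R). -/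
/-- `N ⊆ M` is distributive iff `(N : m) + (mR : n) = R` for all `m ∈ M`, `n ∈ N`. -/
theorem isDistribSubmodule_iff_colon {R M : Type*} [Ring R] [AddCommGroup M]
    [Module Rᵐᵒᵖ M] (N : Submodule Rᵐᵒᵖ M) :
    IsDistribSubmodule N ↔
      ∀ m : M, ∀ n ∈ N, ∃ a b : R, a + b = 1 ∧
        (MulOpposite.op a) • m ∈ N ∧
        (MulOpposite.op b) • n ∈ Submodule.span Rᵐᵒᵖ ({m} : Set M) := by
  constructor
  · intro h m n hn
    set Y₁ : Submodule Rᵐᵒᵖ M := Submodule.span Rᵐᵒᵖ ({m} : Set M) with hY₁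
    set Y₂ : Submodule Rᵐᵒᵖ M := Submodule.span Rᵐᵒᵖ ({m + n} : Set M) with hY₂
    have hmem : m + n ∈ N ⊔ (Y₁ ⊓ Y₂) := by
      rw [h Y₁ Y₂]
      constructor
      · exact add_mem (Submodule.mem_sup_right (Submodule.mem_span_singleton_self m))
          (Submodule.mem_sup_left hn)
      · exact Submodule.mem_sup_right (Submodule.mem_span_singleton_self (m + n))
    obtain ⟨ν, hν, z, hz, hsum⟩ := Submodule.mem_sup.mp hmem
    obtain ⟨d, hd⟩ := Submodule.mem_span_singleton.mp hz.1
    obtain ⟨c, hc⟩ := Submodule.mem_span_singleton.mp hz.2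
    refine ⟨1 - c.unop, c.unop, by abel, ?_, ?_⟩
    · -- op (1 - c.unop) • m ∈ N
      have hν' : (m + n) - c • (m + n) ∈ N := by
        have : ν = (m + n) - z := by rw [← hsum]; abel
        rw [this, ← hc] at hν; exact hν
      have h1 : (MulOpposite.op (1 - c.unop)) • (m + n) ∈ N := by
        have : (MulOpposite.op (1 - c.unop)) • (m + n) = (m + n) - c • (m + n) := by
          rw [MulOpposite.op_sub, sub_smul, MulOpposite.op_one, one_smul, MulOpposite.op_unop]
        rw [this]; exact hν'
      have h2 : (MulOpposite.op (1 - c.unop)) • n ∈ N := Submodule.smul_mem _ _ hn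
      have : (MulOpposite.op (1 - c.unop)) • m
          = (MulOpposite.op (1 - c.unop)) • (m + n) - (MulOpposite.op (1 - c.unop)) • n := by
        rw [smul_add]; abel
      rw [this]; exact sub_mem h1 h2
    · -- op c.unop • n ∈ span {m}
      have : (MulOpposite.op c.unop) • n = d • m - c • m := by
        rw [MulOpposite.op_unop]
        have : c • (m + n) = d • m := by rw [hc, hd]
        rw [smul_add] at this
        rw [← this]; abel
      rw [this]
      exact sub_mem (Submodule.smul_mem _ _ (Submodule.mem_span_singleton_self m))
        (Submodule.smul_mem _ _ (Submodule.mem_span_singleton_self m))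
  · intro h Y₁ Y₂
    refine le_antisymm (sup_le (le_inf le_sup_left le_sup_left) (le_inf
      (le_trans inf_le_left le_sup_right) (le_trans inf_le_right le_sup_right))) ?_
    rintro x ⟨hx1, hx2⟩
    obtain ⟨n₁, hn₁, y₁, hy₁, rfl⟩ := Submodule.mem_sup.mp hx1
    obtain ⟨n₂, hn₂, y₂, hy₂, hx⟩ := Submodule.mem_sup.mp hx2
    have hnN : n₂ - n₁ ∈ N := sub_mem hn₂ hn₁
    have hne : y₁ = (n₂ - n₁) + y₂ := by
      have := hx
      rw [show n₂ + y₂ = n₁ + ((n₂ - n₁) + y₂) by abel] at this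
      exact (add_right_injective n₁ this.symm)
    obtain ⟨a, b, hab, ha, hb⟩ := h y₁ (n₂ - n₁) hnN
    have hspan : Submodule.span Rᵐᵒᵖ ({y₁} : Set M) ≤ Y₁ :=
      Submodule.span_le.mpr (Set.singleton_subset_iff.mpr hy₁)
    have hbn : (MulOpposite.op b) • (n₂ - n₁) ∈ Y₁ := hspan hb
    have hby₂ : (MulOpposite.op b) • y₂ ∈ Y₁ ⊓ Y₂ := by
      constructor
      · have : (MulOpposite.op b) • y₂
            = (MulOpposite.op b) • y₁ - (MulOpposite.op b) • (n₂ - n₁) := by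
          rw [hne, smul_add]; abel
        rw [this]
        exact sub_mem (Submodule.smul_mem _ _ hy₁) hbn
      · exact Submodule.smul_mem _ _ hy₂
    have hsplit : n₁ + y₁ = (n₁ + (MulOpposite.op a) • y₁ + (MulOpposite.op b) • (n₂ - n₁))
        + (MulOpposite.op b) • y₂ := by
      have h1 : y₁ = (MulOpposite.op a) • y₁ + (MulOpposite.op b) • y₁ := by
        rw [← add_smul, ← MulOpposite.op_add, hab, MulOpposite.op_one, one_smul]
      have h2 : (MulOpposite.op b) • y₁
          = (MulOpposite.op b) • (n₂ - n₁) + (MulOpposite.op b) • y₂ := by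
        rw [hne, smul_add]
      calc n₁ + y₁ = n₁ + ((MulOpposite.op a) • y₁ + (MulOpposite.op b) • y₁) := by rw [← h1]
        _ = n₁ + ((MulOpposite.op a) • y₁
              + ((MulOpposite.op b) • (n₂ - n₁) + (MulOpposite.op b) • y₂)) := by rw [← h2]
        _ = (n₁ + (MulOpposite.op a) • y₁ + (MulOpposite.op b) • (n₂ - n₁))
              + (MulOpposite.op b) • y₂ := by abel
    rw [hsplit]
    exact Submodule.add_mem_sup
      (add_mem (add_mem hn₁ ha) (Submodule.smul_mem _ _ hnN)) hby₂
end

section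
/- Let R be a ring such that any two simple right R-modules are isomorphic (for instance, a local ring), let M be a right R-module, and let N be a proper submodule of M (N ≠ M). Then the following are equivalent: (a) N is a distributive submodule of M; (b) N ≤ m·R for every m ∈ M \ N, where m·R is the cyclic submodule generated by m; (c) N is comparable with every submodule of M, i.e., for every submodule H of M either H ≤ N or N ≤ H. -/
universe u v

/-- The "meet" form of distributivity, derived from the "join" form by an element argument
(implicitly using modularity of the submodule lattice). -/
theorem IsDistribSubmodule.inf_sup_le {R M : Type*} [Ring R] [AddCommGroup M] [Module R M]
    {N : Submodule R M} (h : IsDistribSubmodule N) (Y₁ Y₂ : Submodule R M) :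
    N ⊓ (Y₁ ⊔ Y₂) ≤ (N ⊓ Y₁) ⊔ (N ⊓ Y₂) := by
  rintro z ⟨hzN, hz⟩
  obtain ⟨y₁, hy₁, y₂, hy₂, rfl⟩ := Submodule.mem_sup.1 hz
  have h1 : y₁ ∈ N ⊔ (Submodule.span R {y₁} ⊓ Submodule.span R {y₂}) := by
    rw [h (Submodule.span R {y₁}) (Submodule.span R {y₂})]
    refine ⟨SetLike.le_def.1 le_sup_right (Submodule.mem_span_singleton_self y₁), ?_⟩
    have : y₁ = (y₁ + y₂) + (-1 : R) • y₂ := by simp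
    rw [this]
    exact Submodule.add_mem _ (SetLike.le_def.1 le_sup_left hzN)
      (SetLike.le_def.1 le_sup_right (Submodule.smul_mem _ _
        (Submodule.mem_span_singleton_self y₂)))
  obtain ⟨w, hw, c, hc, hwc⟩ := Submodule.mem_sup.1 h1
  have hcY₁ : c ∈ Y₁ :=
    (Submodule.span_singleton_le_iff_mem _ _).2 hy₁ hc.1
  have hcY₂ : c ∈ Y₂ :=
    (Submodule.span_singleton_le_iff_mem _ _).2 hy₂ hc.2
  refine Submodule.mem_sup.2 ⟨w, ⟨hw, ?_⟩, c + y₂, ⟨?_, Submodule.add_mem _ hcY₂ hy₂⟩, ?_⟩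
  · have : w = y₁ + (-1 : R) • c := by rw [← hwc]; simp
    rw [this]
    exact Submodule.add_mem _ hy₁ (Submodule.smul_mem _ _ hcY₁)
  · have : c + y₂ = (y₁ + y₂) + (-1 : R) • w := by rw [← hwc]; simp; abel
    rw [this]
    exact Submodule.add_mem _ hzN (Submodule.smul_mem _ _ hw)
  · rw [← hwc]; abel

/-- Comparability with every submodule implies distributivity (modular law). -/
theorem isDistribSubmodule_of_comparable {R M : Type*} [Ring R] [AddCommGroup M] [Module R M]
    {N : Submodule R M} (hc : ∀ H : Submodule R M, H ≤ N ∨ N ≤ H) :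
    IsDistribSubmodule N := by
  intro Y₁ Y₂
  rcases hc Y₁ with h1 | h1
  · rw [sup_eq_left.2 h1, sup_eq_left.2 (le_trans inf_le_left h1),
      inf_eq_left.2 (le_sup_left : N ≤ N ⊔ Y₂)]
  · rw [sup_eq_right.2 h1, inf_comm Y₁ Y₂, ← sup_inf_assoc_of_le Y₂ h1, inf_comm]

/-- Hard direction: distributivity, together with uniqueness of simple modules,
implies `N ≤ mR` for every `m ∉ N`. -/
theorem IsDistribSubmodule.le_span_singleton {R : Type u} [Ring R] {M : Type v}
    [AddCommGroup M] [Module Rᵐᵒᵖ M]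
    (hsimple : ∀ (S S' : Type u) [AddCommGroup S] [Module Rᵐᵒᵖ S]
      [AddCommGroup S'] [Module Rᵐᵒᵖ S'], IsSimpleModule Rᵐᵒᵖ S → IsSimpleModule Rᵐᵒᵖ S' →
      Nonempty (S ≃ₗ[Rᵐᵒᵖ] S'))
    {N : Submodule Rᵐᵒᵖ M} (h : IsDistribSubmodule N)
    {m : M} (hm : m ∉ N) : N ≤ Submodule.span Rᵐᵒᵖ ({m} : Set M) := by
  intro n hn
  by_contra hns
  -- the right ideal of elements sending `m` into `N`
  set B : Ideal Rᵐᵒᵖ := Submodule.comap (LinearMap.toSpanSingleton Rᵐᵒᵖ M m) N with hBdef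
  -- the right ideal of elements sending `n` into `mR`
  set A : Ideal Rᵐᵒᵖ :=
    Submodule.comap (LinearMap.toSpanSingleton Rᵐᵒᵖ M n)
      (Submodule.span Rᵐᵒᵖ ({m} : Set M)) with hAdef
  have hB_ne : B ≠ ⊤ := by
    intro hB
    apply hm
    have : (1 : Rᵐᵒᵖ) ∈ B := hB ▸ Submodule.mem_top
    simpa [hBdef, LinearMap.toSpanSingleton_apply] using this
  have hA_ne : A ≠ ⊤ := by
    intro hA
    apply hns
    have : (1 : Rᵐᵒᵖ) ∈ A := hA ▸ Submodule.mem_top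
    simpa [hAdef, LinearMap.toSpanSingleton_apply] using this
  -- key step: for every x ∈ N there is β ∈ B with x - β • x ∈ mR
  have star : ∀ x ∈ N, ∃ β ∈ B, x - β • x ∈ Submodule.span Rᵐᵒᵖ ({m} : Set M) := by
    intro x hx
    by_cases hxm : x ∈ Submodule.span Rᵐᵒᵖ ({m} : Set M)
    · exact ⟨0, B.zero_mem, by simpa using hxm⟩
    · have hxmem : x ∈ N ⊓ (Submodule.span Rᵐᵒᵖ ({m} : Set M) ⊔
          Submodule.span Rᵐᵒᵖ ({m + x} : Set M)) := by
        refine ⟨hx, ?_⟩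
        have hmem : (-1 : Rᵐᵒᵖ) • m + (1 : Rᵐᵒᵖ) • (m + x) ∈
            Submodule.span Rᵐᵒᵖ ({m} : Set M) ⊔ Submodule.span Rᵐᵒᵖ ({m + x} : Set M) :=
          Submodule.add_mem _
            (SetLike.le_def.1 le_sup_left (Submodule.smul_mem _ _
              (Submodule.mem_span_singleton_self m)))
            (SetLike.le_def.1 le_sup_right (Submodule.smul_mem _ _
              (Submodule.mem_span_singleton_self (m + x))))
        simpa using hmem
      have hdec := h.inf_sup_le (Submodule.span Rᵐᵒᵖ ({m} : Set M))
        (Submodule.span Rᵐᵒᵖ ({m + x} : Set M)) hxmem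
      obtain ⟨a, ha, c, hc, hac⟩ := Submodule.mem_sup.1 hdec
      obtain ⟨β, hβ⟩ := Submodule.mem_span_singleton.1 hc.2
      refine ⟨β, ?_, ?_⟩
      · have hbm : β • m = c - β • x := by rw [← hβ, smul_add]; abel
        have : β • m ∈ N := by
          rw [hbm]; exact Submodule.sub_mem _ hc.1 (Submodule.smul_mem _ _ hx)
        simpa [hBdef, LinearMap.toSpanSingleton_apply] using this
      · have hxx : x - β • x = a + β • m := by
          have hbm : β • m = c - β • x := by rw [← hβ, smul_add]; abel
          rw [hbm, ← hac]; abel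
        rw [hxx]
        exact Submodule.add_mem _ ha.2
          (Submodule.smul_mem _ _ (Submodule.mem_span_singleton_self m))
  -- translate the key step to right ideals
  have star' : ∀ ρ : Rᵐᵒᵖ, ∃ β ∈ B, (1 - β) * ρ ∈ A := by
    intro ρ
    obtain ⟨β, hβB, hβ⟩ := star (ρ • n) (Submodule.smul_mem _ _ hn)
    refine ⟨β, hβB, ?_⟩
    have : ((1 - β) * ρ) • n = ρ • n - β • ρ • n := by
      rw [mul_smul, sub_smul, one_smul]
    simpa [hAdef, LinearMap.toSpanSingleton_apply, this] using hβ
  obtain ⟨mm, hmm, hAmm⟩ := Ideal.exists_le_maximal A hA_ne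
  obtain ⟨nn, hnn, hBnn⟩ := Ideal.exists_le_maximal B hB_ne
  have hSm : IsSimpleModule Rᵐᵒᵖ (Rᵐᵒᵖ ⧸ mm) :=
    isSimpleModule_iff_isCoatom.2 (Ideal.isMaximal_def.1 hmm)
  have hSn : IsSimpleModule Rᵐᵒᵖ (Rᵐᵒᵖ ⧸ nn) :=
    isSimpleModule_iff_isCoatom.2 (Ideal.isMaximal_def.1 hnn)
  obtain ⟨e⟩ := hsimple (Rᵐᵒᵖ ⧸ mm) (Rᵐᵒᵖ ⧸ nn) hSm hSn
  obtain ⟨ρ, hρ⟩ := Submodule.Quotient.mk_surjective mm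
    (e.symm (Submodule.Quotient.mk (1 : Rᵐᵒᵖ)))
  obtain ⟨β, hβB, hβA⟩ := star' ρ
  have h0 : (1 - β) • (Submodule.Quotient.mk ρ : Rᵐᵒᵖ ⧸ mm) = 0 := by
    rw [← Submodule.Quotient.mk_smul, Submodule.Quotient.mk_eq_zero]
    have : (1 - β) • ρ = (1 - β) * ρ := rfl
    rw [this]
    exact hAmm hβA
  have h1 : (1 - β) • (Submodule.Quotient.mk (1 : Rᵐᵒᵖ) : Rᵐᵒᵖ ⧸ nn) = 0 := by
    calc (1 - β) • (Submodule.Quotient.mk (1 : Rᵐᵒᵖ) : Rᵐᵒᵖ ⧸ nn)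
        = (1 - β) • e (Submodule.Quotient.mk ρ) := by rw [hρ, e.apply_symm_apply]
      _ = e ((1 - β) • (Submodule.Quotient.mk ρ : Rᵐᵒᵖ ⧸ mm)) := (e.map_smul _ _).symm
      _ = 0 := by rw [h0, e.map_zero]
  have honeβ : (1 : Rᵐᵒᵖ) - β ∈ nn := by
    have : ((1 - β) • (1 : Rᵐᵒᵖ)) = 1 - β := by simp
    rwa [← Submodule.Quotient.mk_smul, Submodule.Quotient.mk_eq_zero, this] at h1
  have hone : (1 : Rᵐᵒᵖ) ∈ nn := by
    have := nn.add_mem honeβ (hBnn hβB)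
    simpa using this
  exact hnn.ne_top (Ideal.eq_top_of_isUnit_mem nn hone isUnit_one)

/-- Over a ring with a unique simple right module up to isomorphism, a proper submodule `N ⊊ M`
is distributive iff `N ⊆ mR` for all `m ∈ M \ N`, iff `N` is comparable with every submodule. -/
theorem isDistribSubmodule_iff_of_unique_simple {R : Type u} [Ring R] {M : Type v}
    [AddCommGroup M] [Module Rᵐᵒᵖ M]
    (hsimple : ∀ (S S' : Type u) [AddCommGroup S] [Module Rᵐᵒᵖ S]
      [AddCommGroup S'] [Module Rᵐᵒᵖ S'], IsSimpleModule Rᵐᵒᵖ S → IsSimpleModule Rᵐᵒᵖ S' →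
      Nonempty (S ≃ₗ[Rᵐᵒᵖ] S'))
    (N : Submodule Rᵐᵒᵖ M) (hN : N ≠ ⊤) :
    (IsDistribSubmodule N ↔
        ∀ m : M, m ∉ N → N ≤ Submodule.span Rᵐᵒᵖ ({m} : Set M)) ∧
    ((∀ m : M, m ∉ N → N ≤ Submodule.span Rᵐᵒᵖ ({m} : Set M)) ↔
        ∀ H : Submodule Rᵐᵒᵖ M, H ≤ N ∨ N ≤ H) := by
  have hbc : (∀ m : M, m ∉ N → N ≤ Submodule.span Rᵐᵒᵖ ({m} : Set M)) →
      ∀ H : Submodule Rᵐᵒᵖ M, H ≤ N ∨ N ≤ H := by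
    intro hb H
    by_cases hH : H ≤ N
    · exact Or.inl hH
    · right
      obtain ⟨x, hxH, hxN⟩ := SetLike.not_le_iff_exists.1 hH
      exact le_trans (hb x hxN) ((Submodule.span_singleton_le_iff_mem _ _).2 hxH)
  have hcb : (∀ H : Submodule Rᵐᵒᵖ M, H ≤ N ∨ N ≤ H) →
      ∀ m : M, m ∉ N → N ≤ Submodule.span Rᵐᵒᵖ ({m} : Set M) := by
    intro hc m hm
    rcases hc (Submodule.span Rᵐᵒᵖ ({m} : Set M)) with h | h
    · exact absurd (h (Submodule.mem_span_singleton_self m)) hm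
    · exact h
  refine ⟨⟨fun h m hm => h.le_span_singleton hsimple hm, ?_⟩, hbc, hcb⟩
  intro hb
  exact isDistribSubmodule_of_comparable (hbc hb)
end

section
/- Let R be a ring such that any two simple right R-modules are isomorphic, let M be a right R-module, and let N be a distributive submodule of M with 0 ≠ N and N ≠ M. Then every simple submodule of M is contained in N (so the socle of M is contained in N), and N is an essential submodule of M. -/
universe u v

/-- Over a ring with a unique simple right module up to isomorphism, a nontrivial distributive
submodule `0 ≠ N ⊊ M` contains every simple submodule of `M` (hence the socle of `M`) and is
essential in `M`. -/
theorem socle_le_and_essential_of_distrib {R : Type u} [Ring R] {M : Type v}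
    [AddCommGroup M] [Module Rᵐᵒᵖ M]
    (hsimple : ∀ (S S' : Type u) [AddCommGroup S] [Module Rᵐᵒᵖ S]
      [AddCommGroup S'] [Module Rᵐᵒᵖ S'], IsSimpleModule Rᵐᵒᵖ S → IsSimpleModule Rᵐᵒᵖ S' →
      Nonempty (S ≃ₗ[Rᵐᵒᵖ] S'))
    (N : Submodule Rᵐᵒᵖ M) (hdist : IsDistribSubmodule N) (hbot : N ≠ ⊥) (htop : N ≠ ⊤) :
    (∀ S : Submodule Rᵐᵒᵖ M, IsSimpleModule Rᵐᵒᵖ S → S ≤ N) ∧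
    (∀ X : Submodule Rᵐᵒᵖ M, X ≠ ⊥ → N ⊓ X ≠ ⊥) := by
  have main : ∀ X : Submodule Rᵐᵒᵖ M, X ≠ ⊥ → N ⊓ X ≠ ⊥ := by
    intro X hX hNX
    -- key relation from distributivity
    have key : ∀ x ∈ X, ∀ n ∈ N, ∃ t : Rᵐᵒᵖ, t • x = x ∧ t • n = 0 := by
      intro x hx n hn
      have h := hdist (Submodule.span Rᵐᵒᵖ {x + n}) (Submodule.span Rᵐᵒᵖ {x})
      have hxmem : x ∈ N ⊔ (Submodule.span Rᵐᵒᵖ {x + n} ⊓ Submodule.span Rᵐᵒᵖ {x}) := by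
        rw [h, Submodule.mem_inf]
        constructor
        · have h1 : x + n ∈ N ⊔ Submodule.span Rᵐᵒᵖ {x + n} :=
            Submodule.mem_sup_right (Submodule.mem_span_singleton_self _)
          have h2 : n ∈ N ⊔ Submodule.span Rᵐᵒᵖ {x + n} := Submodule.mem_sup_left hn
          simpa using Submodule.sub_mem _ h1 h2
        · exact Submodule.mem_sup_right (Submodule.mem_span_singleton_self _)
      obtain ⟨m, hm, z, hz, hsum⟩ := Submodule.mem_sup.mp hxmem
      obtain ⟨hz1, hz2⟩ := Submodule.mem_inf.mp hz
      obtain ⟨t, ht⟩ := Submodule.mem_span_singleton.mp hz1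
      obtain ⟨r, hr⟩ := Submodule.mem_span_singleton.mp hz2
      have htn : t • n = 0 := by
        have hmem : t • n ∈ N ⊓ X := by
          refine ⟨N.smul_mem t hn, ?_⟩
          have heq : t • n = r • x - t • x := by
            rw [smul_add] at ht
            rw [eq_sub_iff_add_eq, add_comm]
            exact ht.trans hr.symm
          rw [heq]
          exact X.sub_mem (X.smul_mem r hx) (X.smul_mem t hx)
        rw [hNX] at hmem
        exact hmem
      have hz' : z = t • x := by
        rw [smul_add, htn, add_zero] at ht
        exact ht.symm
      have hm0 : m = 0 := by
        have hmX : m ∈ X := by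
          have h6 : m = x - t • x := by rw [← hz']; exact eq_sub_of_add_eq hsum
          rw [h6]
          exact X.sub_mem hx (X.smul_mem t hx)
        have h7 : m ∈ N ⊓ X := ⟨hm, hmX⟩
        rw [hNX] at h7; exact h7
      have hxz : x = z := by rw [← hsum, hm0, zero_add]
      exact ⟨t, by rw [← hz']; exact hxz.symm, htn⟩
    obtain ⟨n, hnN, hn0⟩ := (Submodule.ne_bot_iff N).mp hbot
    obtain ⟨x, hxX, hx0⟩ := (Submodule.ne_bot_iff X).mp hX
    -- annihilators
    set In : Ideal Rᵐᵒᵖ := LinearMap.ker (LinearMap.toSpanSingleton Rᵐᵒᵖ M n) with hIn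
    set Ix : Ideal Rᵐᵒᵖ := LinearMap.ker (LinearMap.toSpanSingleton Rᵐᵒᵖ M x) with hIx
    have hInt : In ≠ ⊤ := by
      intro h
      have : (1 : Rᵐᵒᵖ) ∈ In := h ▸ Submodule.mem_top
      simp [hIn, LinearMap.mem_ker, LinearMap.toSpanSingleton_apply] at this
      exact hn0 this
    have hIxt : Ix ≠ ⊤ := by
      intro h
      have : (1 : Rᵐᵒᵖ) ∈ Ix := h ▸ Submodule.mem_top
      simp [hIx, LinearMap.mem_ker, LinearMap.toSpanSingleton_apply] at this
      exact hx0 this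
    obtain ⟨Q, hQmax, hQle⟩ := Ideal.exists_le_maximal In hInt
    obtain ⟨P, hPmax, hPle⟩ := Ideal.exists_le_maximal Ix hIxt
    have hQsimple : IsSimpleModule Rᵐᵒᵖ (Rᵐᵒᵖ ⧸ Q) :=
      isSimpleModule_iff_isCoatom.mpr hQmax.out
    have hPsimple : IsSimpleModule Rᵐᵒᵖ (Rᵐᵒᵖ ⧸ P) :=
      isSimpleModule_iff_isCoatom.mpr hPmax.out
    obtain ⟨ψ⟩ := hsimple (Rᵐᵒᵖ ⧸ Q) (Rᵐᵒᵖ ⧸ P) hQsimple hPsimple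
    obtain ⟨c, hc⟩ := Submodule.Quotient.mk_surjective P (ψ (Submodule.Quotient.mk 1))
    have hcP : c ∉ P := by
      intro hcP
      have : ψ (Submodule.Quotient.mk (1 : Rᵐᵒᵖ)) = 0 := by
        rw [← hc]
        exact (Submodule.Quotient.mk_eq_zero P).mpr hcP
      have h1 : (Submodule.Quotient.mk (1 : Rᵐᵒᵖ) : Rᵐᵒᵖ ⧸ Q) = 0 := by
        rw [← ψ.map_eq_zero_iff]
        exact this
      exact hQmax.ne_top (Ideal.eq_top_iff_one Q |>.mpr ((Submodule.Quotient.mk_eq_zero Q).mp h1))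
    have hmul : ∀ r : Rᵐᵒᵖ, r ∈ Q → r * c ∈ P := by
      intro r hr
      have h1 : (Submodule.Quotient.mk r : Rᵐᵒᵖ ⧸ Q) = 0 :=
        (Submodule.Quotient.mk_eq_zero Q).mpr hr
      have h2 : (Submodule.Quotient.mk r : Rᵐᵒᵖ ⧸ Q) = r • Submodule.Quotient.mk (1 : Rᵐᵒᵖ) := by
        rw [← Submodule.Quotient.mk_smul, smul_eq_mul, mul_one]
      have h3 : ψ (Submodule.Quotient.mk r) = Submodule.Quotient.mk (r * c) := by
        rw [h2, map_smul, ← hc, ← Submodule.Quotient.mk_smul, smul_eq_mul]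
      rw [h1, ψ.map_zero] at h3
      exact (Submodule.Quotient.mk_eq_zero P).mp h3.symm
    -- the contradiction
    have hx'X : c • x ∈ X := X.smul_mem c hxX
    obtain ⟨t, ht1, ht2⟩ := key (c • x) hx'X n hnN
    have htQ : t ∈ Q := hQle (by simpa [hIn, LinearMap.mem_ker, LinearMap.toSpanSingleton_apply] using ht2)
    have htcP : t * c ∈ P := hmul t htQ
    have h4 : (t * c - c) • x = 0 := by
      rw [sub_smul, mul_smul, ht1, sub_self]
    have h5 : t * c - c ∈ P :=
      hPle (by simpa [hIx, LinearMap.mem_ker, LinearMap.toSpanSingleton_apply] using h4)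
    exact hcP (by simpa using P.sub_mem htcP h5)
  refine ⟨?_, main⟩
  intro S hS
  have hatom : IsAtom S := isSimpleModule_iff_isAtom.mp hS
  by_contra hle
  have hlt : S ⊓ N < S := lt_of_le_of_ne inf_le_left (fun h => hle (h ▸ inf_le_right))
  have := hatom.2 _ hlt
  exact main S hatom.1 (by rwa [inf_comm] at this)
end

section
/- Let R be a ring, M a right R-module, N a distributive submodule of M, and H a submodule of M with N ⊓ H = ⊥. Then every R-linear map from N to H is zero and every R-linear map from H to N is zero. -/
lemma distrib_disjoint_key {R M : Type*} [Ring R] [AddCommGroup M] [Module R M]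
    (N H : Submodule R M)
    (hdist : ∀ Y₁ Y₂ : Submodule R M, N ⊔ (Y₁ ⊓ Y₂) = (N ⊔ Y₁) ⊓ (N ⊔ Y₂))
    (hdisj : N ⊓ H = ⊥) {x y : M} (hx : x ∈ N) (hy : y ∈ H) :
    ∃ r : R, r • x = 0 ∧ r • y = y := by
  set S : Submodule R M := Submodule.span R {x + y} with hS
  have hSle : N ⊔ S ≤ N ⊔ H := by
    apply sup_le le_sup_left
    rw [hS, Submodule.span_le, Set.singleton_subset_iff]
    exact Submodule.add_mem _ (Submodule.mem_sup_left hx) (Submodule.mem_sup_right hy)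
  have h1 : N ⊔ (S ⊓ H) = N ⊔ S := by
    rw [hdist S H]
    exact inf_eq_left.mpr hSle
  have hyin : y ∈ N ⊔ (S ⊓ H) := by
    rw [h1]
    have hy' : y = (x + y) + (-x) := by abel
    rw [hy']
    exact Submodule.add_mem _
      (Submodule.mem_sup_right (Submodule.mem_span_singleton_self _))
      (Submodule.mem_sup_left (Submodule.neg_mem _ hx))
  obtain ⟨n, hn, w, hw, hnw⟩ := Submodule.mem_sup.mp hyin
  have hnNH : n ∈ N ⊓ H := by
    refine ⟨hn, ?_⟩
    have hn' : n = y - w := by rw [← hnw]; abel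
    rw [hn']
    exact Submodule.sub_mem _ hy hw.2
  have hn0 : n = 0 := by rw [hdisj] at hnNH; exact hnNH
  have hyS : y ∈ S := by rw [← hnw, hn0, zero_add]; exact hw.1
  obtain ⟨r, hr⟩ := Submodule.mem_span_singleton.mp hyS
  have heq : r • x + r • y = y := by rw [← smul_add]; exact hr
  have hrx0 : r • x = 0 := by
    have hmem : r • x ∈ N ⊓ H := by
      refine ⟨Submodule.smul_mem _ _ hx, ?_⟩
      have : r • x = y - r • y := eq_sub_of_add_eq heq
      rw [this]
      exact Submodule.sub_mem _ hy (Submodule.smul_mem _ _ hy)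
    rw [hdisj] at hmem; exact hmem
  exact ⟨r, hrx0, by rw [hrx0, zero_add] at heq; exact heq⟩

/-- If `N ⊆ M` is distributive and `H ⊆ M` with `N ⊓ H = 0`, then
`Hom(N, H) = 0 = Hom(H, N)`. -/
theorem hom_eq_zero_of_distrib_disjoint {R M : Type*} [Ring R] [AddCommGroup M]
    [Module Rᵐᵒᵖ M] (N H : Submodule Rᵐᵒᵖ M) (hdist : IsDistribSubmodule N)
    (hdisj : N ⊓ H = ⊥) :
    (∀ f : N →ₗ[Rᵐᵒᵖ] H, f = 0) ∧ (∀ g : H →ₗ[Rᵐᵒᵖ] N, g = 0) := by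
  constructor
  · intro f
    ext x
    obtain ⟨r, hrx, hry⟩ := distrib_disjoint_key N H hdist hdisj x.2 (f x).2
    have hx0 : r • x = (0 : N) := by
      ext
      simpa using hrx
    have : (f x : M) = r • (f x : M) := hry.symm
    calc (f x : M) = ((r • f x : H) : M) := this
      _ = ((f (r • x) : H) : M) := by rw [map_smul]
      _ = 0 := by rw [hx0, map_zero]; rfl
  · intro g
    ext y
    obtain ⟨r, hrx, hry⟩ := distrib_disjoint_key N H hdist hdisj (g y).2 y.2
    have hy' : r • y = y := by
      ext
      simpa using hry
    calc (g y : M) = (g (r • y) : M) := by rw [hy']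
      _ = ((r • g y : N) : M) := by rw [map_smul]
      _ = r • (g y : M) := rfl
      _ = 0 := hrx
end

section
/- Let R be a ring and M a right R-module. (1) For every family {Nᵢ | i ∈ I} of distributive submodules of M, the sum ⨆ᵢ Nᵢ is a distributive submodule of M. (2) If N₁ and N₂ are distributive submodules of M, then N₁ ⊓ N₂ is a distributive submodule of M. -/
section Lattice

variable {α : Type*}

/-- Join of two join-distributive elements is join-distributive (any lattice). -/
lemma joinDist_sup [Lattice α] {a b : α}
    (ha : ∀ x y : α, a ⊔ (x ⊓ y) = (a ⊔ x) ⊓ (a ⊔ y))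
    (hb : ∀ x y : α, b ⊔ (x ⊓ y) = (b ⊔ x) ⊓ (b ⊔ y))
    (x y : α) : (a ⊔ b) ⊔ (x ⊓ y) = ((a ⊔ b) ⊔ x) ⊓ ((a ⊔ b) ⊔ y) := by
  rw [sup_assoc, hb x y, ha (b ⊔ x) (b ⊔ y), ← sup_assoc, ← sup_assoc]

/-- In a modular lattice, a join-distributive element is meet-distributive. -/
lemma meetDist_of_joinDist [Lattice α] [IsModularLattice α] {a : α}
    (h : ∀ x y : α, a ⊔ (x ⊓ y) = (a ⊔ x) ⊓ (a ⊔ y))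
    (x y : α) : a ⊓ (x ⊔ y) = (a ⊓ x) ⊔ (a ⊓ y) := by
  -- (**): a ⊔ (x ⊓ (a ⊔ y)) = a ⊔ (x ⊓ y)
  have hstar : a ⊔ (x ⊓ (a ⊔ y)) = a ⊔ (x ⊓ y) := by
    rw [h x (a ⊔ y), h x y, ← sup_assoc, sup_idem]
  -- (S): x ⊓ (a ⊔ y) = (x ⊓ y) ⊔ (x ⊓ a)
  have hS : x ⊓ (a ⊔ y) = (x ⊓ y) ⊔ (x ⊓ a) := by
    have h1 : x ⊓ (a ⊔ y) ≤ a ⊔ (x ⊓ y) := hstar ▸ le_sup_right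
    have h2 : x ⊓ (a ⊔ y) = x ⊓ (a ⊔ x ⊓ y) := by
      refine le_antisymm (le_inf inf_le_left h1)
        (inf_le_inf_left x (sup_le_sup_left inf_le_right a))
    rw [h2, sup_comm a (x ⊓ y), inf_comm x (x ⊓ y ⊔ a),
      sup_inf_assoc_of_le a inf_le_left, inf_comm a x]
  have key : a ⊓ (x ⊔ y) = a ⊓ ((x ⊔ y) ⊓ (a ⊔ y)) :=
    le_antisymm (le_inf inf_le_left (le_inf inf_le_right (inf_le_left.trans le_sup_left)))
      (inf_le_inf_left a inf_le_left)
  have hmod1 : (x ⊔ y) ⊓ (a ⊔ y) = y ⊔ x ⊓ (a ⊔ y) := by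
    rw [sup_comm x y, sup_inf_assoc_of_le x le_sup_right]
  rw [key, hmod1, hS, ← sup_assoc, sup_eq_left.mpr (inf_le_right : x ⊓ y ≤ y),
    sup_comm y (x ⊓ a), inf_comm a (x ⊓ a ⊔ y),
    sup_inf_assoc_of_le y inf_le_right, inf_comm x a, inf_comm y a]

/-- In a modular lattice, a meet-distributive element is join-distributive. -/
lemma joinDist_of_meetDist [Lattice α] [IsModularLattice α] {a : α}
    (h : ∀ x y : α, a ⊓ (x ⊔ y) = (a ⊓ x) ⊔ (a ⊓ y))
    (x y : α) : a ⊔ (x ⊓ y) = (a ⊔ x) ⊓ (a ⊔ y) :=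
  meetDist_of_joinDist (α := αᵒᵈ) (a := OrderDual.toDual a)
    (fun u v => h (OrderDual.ofDual u) (OrderDual.ofDual v)) x y

/-- Meet of two meet-distributive elements is meet-distributive (any lattice). -/
lemma meetDist_inf [Lattice α] {a b : α}
    (ha : ∀ x y : α, a ⊓ (x ⊔ y) = (a ⊓ x) ⊔ (a ⊓ y))
    (hb : ∀ x y : α, b ⊓ (x ⊔ y) = (b ⊓ x) ⊔ (b ⊓ y))
    (x y : α) : (a ⊓ b) ⊓ (x ⊔ y) = ((a ⊓ b) ⊓ x) ⊔ ((a ⊓ b) ⊓ y) := by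
  rw [inf_assoc, hb x y, ha (b ⊓ x) (b ⊓ y), ← inf_assoc, ← inf_assoc]

end Lattice

lemma isDistribSubmodule_bot {R M : Type*} [Ring R] [AddCommGroup M] [Module R M] :
    IsDistribSubmodule (⊥ : Submodule R M) := by
  intro Y₁ Y₂; simp

lemma isDistribSubmodule_sup {R M : Type*} [Ring R] [AddCommGroup M] [Module R M]
    {N₁ N₂ : Submodule R M} (h₁ : IsDistribSubmodule N₁) (h₂ : IsDistribSubmodule N₂) :
    IsDistribSubmodule (N₁ ⊔ N₂) :=
  joinDist_sup h₁ h₂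

lemma isDistribSubmodule_finsetSup {R M : Type*} [Ring R] [AddCommGroup M] [Module R M]
    {I : Type*} (N : I → Submodule R M) (hN : ∀ i, IsDistribSubmodule (N i))
    (s : Finset I) : IsDistribSubmodule (s.sup N) := by
  classical
  induction s using Finset.induction_on with
  | empty => simpa using isDistribSubmodule_bot
  | insert _ _ h ih =>
    rw [Finset.sup_insert]
    exact isDistribSubmodule_sup (hN _) ih

/-- Arbitrary sums of distributive submodules are distributive, and the meet of two
distributive submodules is distributive. -/
theorem iSup_and_inf_isDistribSubmodule {R M : Type*} [Ring R] [AddCommGroup M]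
    [Module Rᵐᵒᵖ M] :
    (∀ {I : Type*} (N : I → Submodule Rᵐᵒᵖ M),
      (∀ i, IsDistribSubmodule (N i)) → IsDistribSubmodule (⨆ i, N i)) ∧
    (∀ N₁ N₂ : Submodule Rᵐᵒᵖ M, IsDistribSubmodule N₁ → IsDistribSubmodule N₂ →
      IsDistribSubmodule (N₁ ⊓ N₂)) := by
  classical
  constructor
  · intro I N hN Y₁ Y₂
    refine le_antisymm (le_inf (sup_le_sup_left inf_le_left _)
      (sup_le_sup_left inf_le_right _)) ?_
    intro m hm
    obtain ⟨hm1, hm2⟩ := Submodule.mem_inf.mp hm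
    obtain ⟨s₁, hs₁, y₁, hy₁, hsum₁⟩ := Submodule.mem_sup.mp hm1
    obtain ⟨s₂, hs₂, y₂, hy₂, hsum₂⟩ := Submodule.mem_sup.mp hm2
    obtain ⟨F₁, hF₁⟩ := Submodule.exists_finset_of_mem_iSup N hs₁
    obtain ⟨F₂, hF₂⟩ := Submodule.exists_finset_of_mem_iSup N hs₂
    set D : Submodule Rᵐᵒᵖ M := (F₁ ∪ F₂).sup N with hD
    have hDdist : IsDistribSubmodule D := isDistribSubmodule_finsetSup N hN _
    have hsub : ∀ (F : Finset I), F ⊆ F₁ ∪ F₂ → (⨆ i ∈ F, N i) ≤ D := by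
      intro F hF
      rw [hD, Finset.sup_eq_iSup]
      exact iSup_le fun i => iSup_le fun hi => le_iSup₂ (f := fun i _ => N i) i (hF hi)
    have hs₁D : s₁ ∈ D := hsub F₁ Finset.subset_union_left hF₁
    have hs₂D : s₂ ∈ D := hsub F₂ Finset.subset_union_right hF₂
    have hmD : m ∈ (D ⊔ Y₁) ⊓ (D ⊔ Y₂) := by
      constructor
      · exact hsum₁ ▸ Submodule.add_mem _ (Submodule.mem_sup_left hs₁D)
          (Submodule.mem_sup_right hy₁)
      · exact hsum₂ ▸ Submodule.add_mem _ (Submodule.mem_sup_left hs₂D)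
          (Submodule.mem_sup_right hy₂)
    rw [← hDdist Y₁ Y₂] at hmD
    have hDle : D ≤ ⨆ i, N i := by
      rw [hD, Finset.sup_eq_iSup]
      exact iSup_le fun i => iSup_le fun _ => le_iSup N i
    exact sup_le_sup_left (le_refl (Y₁ ⊓ Y₂)) _ |>.trans' (le_refl _) <|
      (sup_le_sup_right hDle (Y₁ ⊓ Y₂)) hmD
  · intro N₁ N₂ h₁ h₂
    exact joinDist_of_meetDist (meetDist_inf (meetDist_of_joinDist h₁)
      (meetDist_of_joinDist h₂))
end

section
/- Let A be a commutative ring, Σ ⊆ A a multiplicatively closed subset (submonoid), and M an A-module. If N is a distributive submodule of M, then the localized submodule Σ⁻¹N of the localized module Σ⁻¹M is a distributive submodule of Σ⁻¹M (as a module over Σ⁻¹A). -/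
section Aux

variable {R S M N : Type*}
variable (S) [CommSemiring R] [CommSemiring S] [AddCommMonoid M] [AddCommMonoid N]
variable [Module R M] [Module R N] [Algebra R S] [Module S N] [IsScalarTower R S N]
variable (p : Submonoid R) [IsLocalization p S] (f : M →ₗ[R] N) [IsLocalizedModule p f]

open IsLocalizedModule

theorem localized'_sup_aux (N₁ N₂ : Submodule R M) :
    (N₁ ⊔ N₂).localized' S p f = N₁.localized' S p f ⊔ N₂.localized' S p f := by
  apply le_antisymm
  · rintro _ ⟨m, hm, s, rfl⟩
    obtain ⟨m₁, hm₁, m₂, hm₂, rfl⟩ := Submodule.mem_sup.mp hm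
    rw [mk'_add]
    exact add_mem (Submodule.mem_sup_left ⟨m₁, hm₁, s, rfl⟩)
      (Submodule.mem_sup_right ⟨m₂, hm₂, s, rfl⟩)
  · refine sup_le ?_ ?_ <;> rintro _ ⟨m, hm, s, rfl⟩
    · exact ⟨m, Submodule.mem_sup_left hm, s, rfl⟩
    · exact ⟨m, Submodule.mem_sup_right hm, s, rfl⟩

theorem localized'_inf_aux (N₁ N₂ : Submodule R M) :
    (N₁ ⊓ N₂).localized' S p f = N₁.localized' S p f ⊓ N₂.localized' S p f := by
  apply le_antisymm
  · rintro _ ⟨m, hm, s, rfl⟩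
    exact ⟨⟨m, hm.1, s, rfl⟩, ⟨m, hm.2, s, rfl⟩⟩
  · rintro x ⟨⟨m₁, hm₁, s₁, rfl⟩, ⟨m₂, hm₂, s₂, hx⟩⟩
    obtain ⟨u, hu⟩ := (mk'_eq_mk'_iff f m₂ m₁ s₂ s₁).mp hx
    refine ⟨(u * s₂) • m₁, ⟨Submodule.smul_of_tower_mem _ _ hm₁, ?_⟩, (u * s₂) * s₁, ?_⟩
    · have : (u * s₂) • m₁ = (u * s₁) • m₂ := by
        rw [mul_smul, mul_smul]; exact hu
      rw [this]
      exact Submodule.smul_of_tower_mem _ _ hm₂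
    · rw [mk'_cancel_left]

theorem localized'_comap_aux (Y : Submodule S N) :
    (Submodule.comap f (Y.restrictScalars R)).localized' S p f = Y := by
  apply le_antisymm
  · rintro _ ⟨m, hm, s, rfl⟩
    have h1 : (s : R) • mk' f m s = f m := mk'_cancel' f m s
    have h2 : mk' f m s = IsLocalization.mk' S (1 : R) s • ((s : R) • mk' f m s) := by
      rw [algebra_compatible_smul S (s : R), smul_smul, ← IsLocalization.mk'_one (M := p) S,
        ← IsLocalization.mk'_mul, one_mul, mul_one, IsLocalization.mk'_self, one_smul]
    rw [h2, h1]
    exact Submodule.smul_mem _ _ hm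
  · intro x hx
    obtain ⟨⟨m, s⟩, rfl⟩ := mk'_surjective p f x
    refine ⟨m, ?_, s, rfl⟩
    have : f m = (s : R) • mk' f m s := (mk'_cancel' f m s).symm
    simpa only [Submodule.mem_comap, Submodule.restrictScalars_mem, this, Function.uncurry_apply_pair] using
      Submodule.smul_of_tower_mem Y _ hx

end Aux

/-- If `N ⊆ M` is a distributive submodule of an `A`-module `M`, then `Σ⁻¹N ⊆ Σ⁻¹M` is a
distributive submodule over `Σ⁻¹A`. -/
theorem isDistribSubmodule_localized {A M : Type*} [CommRing A] [AddCommGroup M]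
    [Module A M] (S : Submonoid A) (N : Submodule A M) (hdist : IsDistribSubmodule N) :
    IsDistribSubmodule (Submodule.localized S N) := by
  intro Y₁ Y₂
  set f := LocalizedModule.mkLinearMap S M
  set R' := Localization S
  rw [← localized'_comap_aux R' S f Y₁, ← localized'_comap_aux R' S f Y₂]
  rw [← localized'_inf_aux, ← localized'_sup_aux, hdist, localized'_inf_aux,
    localized'_sup_aux, localized'_sup_aux]
end

section
/- Let R be a ring, M a right R-module, and N, H submodules of M with N ⊓ H = ⊥ and N ⊔ H = ⊤. Then the following are equivalent: (a) N is a distributive submodule of M; (b) N and H have no isomorphic simple subfactors, i.e., there are no submodules P < Q ≤ N and P' < Q' ≤ H of M with Q/P simple and Q/P ≅ Q'/P'; (c) for every n ∈ N and h ∈ H there exist a, b ∈ R with a + b = 1, n·a = 0 and h·b = 0 (i.e., Ann(n) + Ann(h) = R); (d) every submodule X of M satisfies X = (X ⊓ N) ⊔ (X ⊓ H); (e) H is a distributive submodule of M. -/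
open Submodule

/-- From the splitting property (4), `N` is distributive. -/
private lemma aux_distrib_of_split {R M : Type*} [Ring R] [AddCommGroup M] [Module R M]
    (N H : Submodule R M) (hdisj : N ⊓ H = ⊥)
    (h4 : ∀ X : Submodule R M, X = (X ⊓ N) ⊔ (X ⊓ H)) : IsDistribSubmodule N := by
  have key : ∀ Y : Submodule R M, (N ⊔ Y) ⊓ H ≤ Y := by
    intro Y z hz
    obtain ⟨hz1, hzH⟩ := hz
    have hY : N ⊔ Y = N ⊔ (Y ⊓ H) := by
      conv_lhs => rw [h4 Y]
      rw [← sup_assoc, show N ⊔ (Y ⊓ N) = N from sup_eq_left.mpr inf_le_right]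
    rw [hY] at hz1
    obtain ⟨a, haN, b, hb, hab⟩ := mem_sup.mp hz1
    have haH : a ∈ H := by
      have ha : a = z - b := by rw [← hab]; abel
      exact ha ▸ sub_mem hzH hb.2
    have h0 : a ∈ (⊥ : Submodule R M) := hdisj ▸ ⟨haN, haH⟩
    have : a = 0 := by simpa using h0
    have : z = b := by rw [← hab, this, zero_add]
    exact this ▸ hb.1
  intro Y₁ Y₂
  apply le_antisymm
  · exact le_inf (sup_le_sup_left inf_le_left _) (sup_le_sup_left inf_le_right _)
  · set X := (N ⊔ Y₁) ⊓ (N ⊔ Y₂) with hXdef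
    have hNX : N ≤ X := le_inf le_sup_left le_sup_left
    have hXH : X ⊓ H ≤ Y₁ ⊓ Y₂ :=
      le_inf (le_trans (inf_le_inf_right H inf_le_left) (key Y₁))
        (le_trans (inf_le_inf_right H inf_le_right) (key Y₂))
    calc X = (X ⊓ N) ⊔ (X ⊓ H) := h4 X
      _ = N ⊔ (X ⊓ H) := by rw [inf_eq_right.mpr hNX]
      _ ≤ N ⊔ (Y₁ ⊓ Y₂) := sup_le_sup_left hXH _

/-- The cyclic subfactor `span {n} / n•I` is isomorphic to `R ⧸ I` when `Ann(n) ≤ I`. -/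
private lemma aux_cyclic {R M : Type*} [Ring R] [AddCommGroup M] [Module R M]
    (n : M) (I : Ideal R) (hann : ∀ c : R, c • n = 0 → c ∈ I) :
    Nonempty ((R ⧸ I) ≃ₗ[R] (span R {n} ⧸ comap (span R {n}).subtype
      (map (LinearMap.toSpanSingleton R M n) I))) := by
  set Q := span R {n} with hQ
  set P := comap Q.subtype (map (LinearMap.toSpanSingleton R M n) I) with hP
  have hg : ∀ c : R, (LinearMap.toSpanSingleton R M n) c ∈ Q := fun c =>
    smul_mem _ c (subset_span (Set.mem_singleton n))
  let g : R →ₗ[R] Q := (LinearMap.toSpanSingleton R M n).codRestrict Q hg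
  let f : R →ₗ[R] Q ⧸ P := P.mkQ.comp g
  have hsurj : Function.Surjective f := by
    intro x
    obtain ⟨⟨y, hy⟩, rfl⟩ := P.mkQ_surjective x
    obtain ⟨c, hc⟩ := mem_span_singleton.mp hy
    exact ⟨c, by simp only [f, g, LinearMap.comp_apply, mkQ_apply]; congr 1; ext; exact hc⟩
  have hker : LinearMap.ker f = I := by
    ext c
    have : f c = 0 ↔ c • n ∈ map (LinearMap.toSpanSingleton R M n) I := by
      simp only [f, g, LinearMap.comp_apply, mkQ_apply, Submodule.Quotient.mk_eq_zero, hP,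
        mem_comap]
      rfl
    rw [LinearMap.mem_ker, this]
    constructor
    · rintro ⟨d, hd, hdc⟩
      have h1 : c - d ∈ I := hann _ (by
        simp only [LinearMap.toSpanSingleton_apply] at hdc
        rw [sub_smul, hdc, sub_self])
      simpa using I.add_mem h1 hd
    · intro hc; exact ⟨c, hc, rfl⟩
  exact ⟨(quotEquivOfEq I (LinearMap.ker f) hker.symm).trans
    (f.quotKerEquivOfSurjective hsurj)⟩

/-- Distributivity of `N` implies the annihilator condition. -/
private lemma aux_one_three {R M : Type*} [Ring R] [AddCommGroup M]
    [Module Rᵐᵒᵖ M] (N H : Submodule Rᵐᵒᵖ M) (hdisj : N ⊓ H = ⊥) (hsup : N ⊔ H = ⊤)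
    (hd : IsDistribSubmodule N) :
    ∀ n ∈ N, ∀ h ∈ H, ∃ a b : R, a + b = 1 ∧
      (MulOpposite.op a) • n = (0 : M) ∧ (MulOpposite.op b) • h = (0 : M) := by
  intro n hn h hh
  set x := n + h with hx
  have h1 : N ⊔ (span Rᵐᵒᵖ {x} ⊓ H) = N ⊔ span Rᵐᵒᵖ {x} := by
    rw [hd (span Rᵐᵒᵖ {x}) H, hsup, inf_top_eq]
  have hhmem : h ∈ N ⊔ (span Rᵐᵒᵖ {x} ⊓ H) := by
    rw [h1]
    exact mem_sup.mpr ⟨-n, neg_mem hn, x, subset_span rfl, by rw [hx]; abel⟩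
  obtain ⟨n', hn', y, hy, hsum⟩ := mem_sup.mp hhmem
  obtain ⟨c, hc⟩ := mem_span_singleton.mp hy.1
  have hcn0 : c • n = 0 := by
    have hcnH : c • n ∈ H := by
      have : c • n = y - c • h := by rw [← hc, hx, smul_add]; abel
      exact this ▸ sub_mem hy.2 (H.smul_mem c hh)
    have : c • n ∈ N ⊓ H := ⟨N.smul_mem c hn, hcnH⟩
    rw [hdisj] at this; simpa using this
  have hn'eq : n' = (1 - c) • h := by
    have : n' = h - y := by rw [← hsum]; abel
    rw [this, ← hc, hx, smul_add, hcn0, zero_add, sub_smul, one_smul]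
  have hbh0 : (1 - c) • h = 0 := by
    have : (1 - c) • h ∈ N ⊓ H := ⟨hn'eq ▸ hn', H.smul_mem _ hh⟩
    rw [hdisj] at this; simpa using this
  refine ⟨c.unop, (1 - c).unop, ?_, by simpa using hcn0, by simpa using hbh0⟩
  have : c.unop + (1 - c).unop = (c + (1 - c)).unop := rfl
  rw [this]; simp

/-- For a direct sum `M = N ⊕ H`, the following are equivalent: `N` is distributive; `N` and
`H` have no isomorphic simple subfactors; `Ann(n) + Ann(h) = R` for all `n ∈ N`, `h ∈ H`;
every submodule `X` satisfies `X = (X ⊓ N) ⊔ (X ⊓ H)`; `H` is distributive. -/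
theorem latticeDecomposition_tfae {R M : Type*} [Ring R] [AddCommGroup M]
    [Module Rᵐᵒᵖ M] (N H : Submodule Rᵐᵒᵖ M) (hdisj : N ⊓ H = ⊥) (hsup : N ⊔ H = ⊤) :
    List.TFAE
      [ IsDistribSubmodule N,
        ¬ ∃ P Q P' Q' : Submodule Rᵐᵒᵖ M, P < Q ∧ Q ≤ N ∧ P' < Q' ∧ Q' ≤ H ∧
          IsSimpleModule Rᵐᵒᵖ (Q ⧸ Submodule.comap Q.subtype P) ∧
          Nonempty ((Q ⧸ Submodule.comap Q.subtype P) ≃ₗ[Rᵐᵒᵖ]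
            (Q' ⧸ Submodule.comap Q'.subtype P')),
        ∀ n ∈ N, ∀ h ∈ H, ∃ a b : R, a + b = 1 ∧
          (MulOpposite.op a) • n = (0 : M) ∧ (MulOpposite.op b) • h = (0 : M),
        ∀ X : Submodule Rᵐᵒᵖ M, X = (X ⊓ N) ⊔ (X ⊓ H),
        IsDistribSubmodule H ] := by
  tfae_have 1 → 3 := fun hd => aux_one_three N H hdisj hsup hd
  tfae_have 3 → 4 := by
    intro h3 X
    apply le_antisymm
    · intro x hx
      have hxT : x ∈ N ⊔ H := by rw [hsup]; trivial
      obtain ⟨n, hn, h, hh, hnh⟩ := mem_sup.mp hxT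
      obtain ⟨a, b, hab, hna, hhb⟩ := h3 n hn h hh
      have hopab : MulOpposite.op a + MulOpposite.op b = 1 := by
        rw [← MulOpposite.op_add, hab, MulOpposite.op_one]
      have hn' : n = MulOpposite.op b • n := by
        calc n = (MulOpposite.op a + MulOpposite.op b) • n := by rw [hopab, one_smul]
          _ = MulOpposite.op a • n + MulOpposite.op b • n := add_smul _ _ _
          _ = MulOpposite.op b • n := by rw [hna, zero_add]
      have hh' : h = MulOpposite.op a • h := by
        calc h = (MulOpposite.op a + MulOpposite.op b) • h := by rw [hopab, one_smul]
          _ = MulOpposite.op a • h + MulOpposite.op b • h := add_smul _ _ _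
          _ = MulOpposite.op a • h := by rw [hhb, add_zero]
      have hnx : n = MulOpposite.op b • x := by
        rw [← hnh, smul_add, ← hn', hhb, add_zero]
      have hhx : h = MulOpposite.op a • x := by
        rw [← hnh, smul_add, hna, zero_add, ← hh']
      exact mem_sup.mpr ⟨n, ⟨hnx ▸ X.smul_mem _ hx, hn⟩, h, ⟨hhx ▸ X.smul_mem _ hx, hh⟩, hnh⟩
    · exact sup_le inf_le_left inf_le_left
  tfae_have 4 → 1 := fun h4 => aux_distrib_of_split N H hdisj h4
  tfae_have 4 → 5 := by
    intro h4
    refine aux_distrib_of_split H N (by rw [inf_comm, hdisj]) fun X => ?_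
    rw [sup_comm]; exact h4 X
  tfae_have 5 → 3 := by
    intro hd n hn h hh
    obtain ⟨a, b, hab, hha, hnb⟩ := aux_one_three H N (by rw [inf_comm, hdisj])
      (by rw [sup_comm, hsup]) hd h hh n hn
    exact ⟨b, a, by rw [add_comm]; exact hab, hnb, hha⟩
  tfae_have 3 → 2 := by
    intro h3
    rintro ⟨P, Q, P', Q', hPQ, hQN, hPQ', hQ'H, hsimp, ⟨φ⟩⟩
    obtain ⟨q, hqQ, hqP⟩ := SetLike.exists_of_lt hPQ
    set qbar : Q ⧸ comap Q.subtype P := Submodule.Quotient.mk ⟨q, hqQ⟩ with hqbar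
    obtain ⟨q', hq'⟩ := Submodule.Quotient.mk_surjective _ (φ qbar)
    obtain ⟨a, b, hab, hqa, hq'b⟩ := h3 q (hQN hqQ) (q' : M) (hQ'H q'.2)
    have hopab : MulOpposite.op a + MulOpposite.op b = 1 := by
      rw [← MulOpposite.op_add, hab, MulOpposite.op_one]
    have hqa' : MulOpposite.op a • qbar = 0 := by
      rw [hqbar, ← Submodule.Quotient.mk_smul, Submodule.Quotient.mk_eq_zero]
      have : (MulOpposite.op a • (⟨q, hqQ⟩ : Q) : Q) = 0 := by
        ext; exact hqa
      rw [this]; exact zero_mem _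
    have hqq : qbar = MulOpposite.op b • qbar := by
      calc qbar = (MulOpposite.op a + MulOpposite.op b) • qbar := by rw [hopab, one_smul]
        _ = MulOpposite.op a • qbar + MulOpposite.op b • qbar := add_smul _ _ _
        _ = MulOpposite.op b • qbar := by rw [hqa', zero_add]
    have hphi0 : φ qbar = 0 := by
      rw [hqq, map_smul, ← hq', ← Submodule.Quotient.mk_smul]
      rw [Submodule.Quotient.mk_eq_zero]
      have : (MulOpposite.op b • q' : Q') = 0 := by ext; exact hq'b
      rw [this]; exact zero_mem _
    have : qbar = 0 := by
      apply φ.injective; rw [hphi0, map_zero]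
    rw [hqbar, Submodule.Quotient.mk_eq_zero] at this
    exact hqP this
  tfae_have 2 → 3 := by
    intro h2
    by_contra hcon
    push_neg at hcon
    obtain ⟨n, hn, h, hh, hbad⟩ := hcon
    set An : Ideal Rᵐᵒᵖ := LinearMap.ker (LinearMap.toSpanSingleton Rᵐᵒᵖ M n) with hAn
    set Ah : Ideal Rᵐᵒᵖ := LinearMap.ker (LinearMap.toSpanSingleton Rᵐᵒᵖ M h) with hAh
    have hne : An ⊔ Ah ≠ ⊤ := by
      intro htop
      have h1 : (1 : Rᵐᵒᵖ) ∈ An ⊔ Ah := htop ▸ trivial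
      obtain ⟨c, hc, d, hd, hcd⟩ := mem_sup.mp h1
      refine hbad c.unop d.unop ?_ (by simpa [hAn, LinearMap.mem_ker] using hc) (by simpa [hAh, LinearMap.mem_ker] using hd)
      have : c.unop + d.unop = (c + d).unop := rfl
      rw [this, hcd]; rfl
    obtain ⟨𝔪, h𝔪max, h𝔪le⟩ := Ideal.exists_le_maximal _ hne
    have hannn : ∀ c : Rᵐᵒᵖ, c • n = 0 → c ∈ 𝔪 := fun c hc =>
      h𝔪le (mem_sup_left (by simpa [hAn, LinearMap.mem_ker] using hc))
    have hannh : ∀ c : Rᵐᵒᵖ, c • h = 0 → c ∈ 𝔪 := fun c hc =>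
      h𝔪le (mem_sup_right (by simpa [hAh, LinearMap.mem_ker] using hc))
    have hsimple : IsSimpleModule Rᵐᵒᵖ (Rᵐᵒᵖ ⧸ 𝔪) := by
      rw [isSimpleModule_iff_isCoatom]
      exact h𝔪max.1
    -- the subfactors
    have hnotmem : ∀ (m : M), (∀ c : Rᵐᵒᵖ, c • m = 0 → c ∈ 𝔪) →
        m ∉ map (LinearMap.toSpanSingleton Rᵐᵒᵖ M m) 𝔪 := by
      rintro m hannm ⟨c, hc, hcm⟩
      simp only [LinearMap.toSpanSingleton_apply] at hcm
      have : (1 : Rᵐᵒᵖ) - c ∈ 𝔪 := hannm _ (by rw [sub_smul, hcm, one_smul, sub_self])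
      have h1 : (1 : Rᵐᵒᵖ) ∈ 𝔪 := by simpa using 𝔪.add_mem this hc
      exact h𝔪max.ne_top (Ideal.eq_top_iff_one 𝔪 |>.mpr h1)
    have hmaple : ∀ (m : M), map (LinearMap.toSpanSingleton Rᵐᵒᵖ M m) 𝔪 ≤ span Rᵐᵒᵖ {m} := by
      rintro m z ⟨c, hc, hcm⟩
      exact hcm ▸ smul_mem _ c (subset_span rfl)
    obtain ⟨e⟩ := aux_cyclic n 𝔪 hannn
    obtain ⟨e'⟩ := aux_cyclic h 𝔪 hannh
    refine h2 ⟨map (LinearMap.toSpanSingleton Rᵐᵒᵖ M n) 𝔪, span Rᵐᵒᵖ {n},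
      map (LinearMap.toSpanSingleton Rᵐᵒᵖ M h) 𝔪, span Rᵐᵒᵖ {h},
      lt_of_le_of_ne (hmaple n) ?_, ?_, lt_of_le_of_ne (hmaple h) ?_, ?_, ?_, ⟨e.symm.trans e'⟩⟩
    · intro heq
      exact hnotmem n hannn (heq ▸ subset_span rfl)
    · rw [span_le, Set.singleton_subset_iff]; exact hn
    · intro heq
      exact hnotmem h hannh (heq ▸ subset_span rfl)
    · rw [span_le, Set.singleton_subset_iff]; exact hh
    · exact IsSimpleModule.congr e.symm
  tfae_finish
end

section
/- Let A be a commutative ring, M an A-module, and N, H submodules of M with N ⊓ H = ⊥ and N ⊔ H = ⊤. Then the following are equivalent: (a) N is a distributive submodule of M; (b) the supports of N and H are disjoint, Supp(N) ∩ Supp(H) = ∅; (c) H is a distributive submodule of M. -/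
section aux

variable {A M : Type*} [CommRing A] [AddCommGroup M] [Module A M]

/-- auxiliary condition -/
def CondC (N H : Submodule A M) : Prop :=
  ∀ x ∈ N, ∀ y ∈ H, ∃ a : A, a • x = 0 ∧ (1 - a) • y = 0

lemma condC_symm {N H : Submodule A M} (h : CondC N H) : CondC H N := by
  intro y hy x hx
  obtain ⟨a, ha1, ha2⟩ := h x hx y hy
  exact ⟨1 - a, ha2, by simpa using ha1⟩

lemma distrib_of_condC {N H : Submodule A M} (hsup : N ⊔ H = ⊤) (hC : CondC N H) :
    IsDistribSubmodule N := by
  intro Y₁ Y₂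
  refine le_antisymm (le_inf (sup_le_sup_left inf_le_left N)
    (sup_le_sup_left inf_le_right N)) ?_
  rintro m ⟨hm1, hm2⟩
  obtain ⟨n₁, hn₁, u₁, hu₁, rfl⟩ := Submodule.mem_sup.mp hm1
  obtain ⟨n₂, hn₂, u₂, hu₂, hm⟩ := Submodule.mem_sup.mp hm2
  have hmT : n₁ + u₁ ∈ (⊤ : Submodule A M) := Submodule.mem_top
  rw [← hsup] at hmT
  obtain ⟨n₀, hn₀, h, hh, hdec⟩ := Submodule.mem_sup.mp hmT
  -- x := u₁ - u₂ ∈ N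
  have hxN : u₁ - u₂ ∈ N := by
    have : u₁ - u₂ = n₂ - n₁ := by
      linear_combination (norm := abel) -hm
    rw [this]; exact sub_mem hn₂ hn₁
  obtain ⟨a, ha1, ha2⟩ := hC _ hxN h hh
  -- a • u₁ = a • u₂ ∈ Y₁ ⊓ Y₂
  have hau : a • u₁ = a • u₂ := by
    have : a • (u₁ - u₂) = 0 := ha1
    rw [smul_sub, sub_eq_zero] at this; exact this
  have hz : a • u₁ ∈ Y₁ ⊓ Y₂ :=
    ⟨Submodule.smul_mem _ _ hu₁, hau ▸ Submodule.smul_mem _ _ hu₂⟩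
  -- n₁ + u₁ = (n₀ + (h - a•u₁)) + a•u₁ and h - a•u₁ ∈ N
  have hN' : h - a • u₁ ∈ N := by
    have h1 : u₁ = (n₀ - n₁) + h := by linear_combination (norm := abel) hdec.symm
    have : h - a • u₁ = (1 - a) • h + (-a) • (n₀ - n₁) := by
      rw [h1]; module
    rw [this, ha2, zero_add]
    exact N.smul_mem _ (sub_mem hn₀ hn₁)
  have : n₁ + u₁ = (n₀ + (h - a • u₁)) + a • u₁ := by
    linear_combination (norm := abel) -hdec
  rw [this]
  exact Submodule.add_mem_sup (add_mem hn₀ hN') hz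

lemma condC_of_distrib {N H : Submodule A M} (hdisj : N ⊓ H = ⊥)
    (hD : IsDistribSubmodule N) : CondC N H := by
  intro x hx y hy
  have key := hD (Submodule.span A {x + y}) (Submodule.span A {y})
  have hymem : y ∈ N ⊔ (Submodule.span A {x + y} ⊓ Submodule.span A {y}) := by
    rw [key]
    constructor
    · exact Submodule.mem_sup.mpr ⟨-x, neg_mem hx, x + y,
        Submodule.mem_span_singleton_self _, by abel⟩
    · exact Submodule.mem_sup_right (Submodule.mem_span_singleton_self _)
  obtain ⟨n, hn, z, hz, hdec⟩ := Submodule.mem_sup.mp hymem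
  obtain ⟨hz1, hz2⟩ := hz
  obtain ⟨c, hc⟩ := Submodule.mem_span_singleton.mp hz1
  obtain ⟨b, hb⟩ := Submodule.mem_span_singleton.mp hz2
  -- c • (x + y) = b • y ⇒ c • x = (b - c) • y ∈ N ⊓ H = ⊥
  have hcx : c • x ∈ N ⊓ H := by
    constructor
    · exact N.smul_mem c hx
    · have : c • x = (b - c) • y := by
        have := hb.trans hc.symm
        rw [smul_add] at this
        linear_combination (norm := module) -this
      rw [this]; exact H.smul_mem _ hy
  rw [hdisj, Submodule.mem_bot] at hcx
  refine ⟨c, hcx, ?_⟩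
  -- z = c•(x+y) = c•y (since c•x = 0), so (1-c)•y = y - z = n ∈ N, also ∈ H
  have hzy : z = c • y := by rw [← hc, smul_add, hcx, zero_add]
  have h1 : (1 - c) • y ∈ N ⊓ H := by
    constructor
    · have : (1 - c) • y = n := by
        rw [sub_smul, one_smul, ← hzy]
        linear_combination (norm := abel) hdec.symm
      rw [this]; exact hn
    · exact H.smul_mem _ hy
  rw [hdisj, Submodule.mem_bot] at h1
  exact h1

lemma condC_iff_supp {N H : Submodule A M} :
    CondC N H ↔ Module.support A N ∩ Module.support A H = ∅ := by
  constructor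
  · intro hC
    rw [Set.eq_empty_iff_forall_notMem]
    rintro p ⟨hpN, hpH⟩
    obtain ⟨⟨x, hx⟩, hxann⟩ := Module.mem_support_iff_exists_annihilator.mp hpN
    obtain ⟨⟨y, hy⟩, hyann⟩ := Module.mem_support_iff_exists_annihilator.mp hpH
    obtain ⟨a, ha1, ha2⟩ := hC x hx y hy
    have hap : a ∈ p.asIdeal := by
      apply hxann
      rw [Submodule.mem_annihilator_span_singleton]
      exact Subtype.ext (by simpa using ha1)
    have hap' : 1 - a ∈ p.asIdeal := by
      apply hyann
      rw [Submodule.mem_annihilator_span_singleton]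
      exact Subtype.ext (by simpa using ha2)
    have : (1 : A) ∈ p.asIdeal := by simpa using add_mem hap hap'
    exact p.isPrime.1 (Ideal.eq_top_iff_one _ |>.mpr this)
  · intro hS x hx y hy
    set I : Ideal A := (A ∙ (⟨x, hx⟩ : N)).annihilator ⊔ (A ∙ (⟨y, hy⟩ : H)).annihilator
      with hI
    by_cases hIt : I = ⊤
    · obtain ⟨a, ha, b, hb, hab⟩ := Submodule.mem_sup.mp
        ((Ideal.eq_top_iff_one I).mp hIt)
      rw [Submodule.mem_annihilator_span_singleton] at ha hb
      refine ⟨a, ?_, ?_⟩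
      · have := congrArg Subtype.val ha; simpa using this
      · have : (1 : A) - a = b := by linear_combination hab.symm
        rw [this]
        have := congrArg Subtype.val hb; simpa using this
    · obtain ⟨p, hp, hIp⟩ := Ideal.exists_le_maximal I hIt
      have hpN : (⟨p, hp.isPrime⟩ : PrimeSpectrum A) ∈ Module.support A N :=
        Module.mem_support_iff_exists_annihilator.mpr
          ⟨⟨x, hx⟩, le_trans (le_sup_left.trans hIp) le_rfl⟩
      have hpH : (⟨p, hp.isPrime⟩ : PrimeSpectrum A) ∈ Module.support A H :=
        Module.mem_support_iff_exists_annihilator.mpr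
          ⟨⟨y, hy⟩, le_trans (le_sup_right.trans hIp) le_rfl⟩
      have hmem : (⟨p, hp.isPrime⟩ : PrimeSpectrum A) ∈
          Module.support A N ∩ Module.support A H := ⟨hpN, hpH⟩
      rw [hS] at hmem
      exact absurd hmem (Set.notMem_empty _)

end aux

/-- For a direct sum decomposition `M = N ⊕ H` of a module over a commutative ring `A`,
`N` is distributive iff `Supp(N) ∩ Supp(H) = ∅` iff `H` is distributive. -/
theorem latticeDecomposition_iff_disjoint_support {A M : Type*} [CommRing A]
    [AddCommGroup M] [Module A M] (N H : Submodule A M)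
    (hdisj : N ⊓ H = ⊥) (hsup : N ⊔ H = ⊤) :
    List.TFAE
      [ IsDistribSubmodule N,
        Module.support A N ∩ Module.support A H = ∅,
        IsDistribSubmodule H ] := by
  have hdisj' : H ⊓ N = ⊥ := by rw [inf_comm]; exact hdisj
  have hsup' : H ⊔ N = ⊤ := by rw [sup_comm]; exact hsup
  tfae_have 1 → 2 := fun h => condC_iff_supp.mp (condC_of_distrib hdisj h)
  tfae_have 2 → 1 := fun h => distrib_of_condC hsup (condC_iff_supp.mpr h)
  tfae_have 3 → 2 := fun h => condC_iff_supp.mp (condC_symm (condC_of_distrib hdisj' h))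
  tfae_have 2 → 3 := fun h =>
    distrib_of_condC hsup' (condC_symm (condC_iff_supp.mpr h))
  tfae_finish
end

section
/- Let A be a commutative noetherian ring, M an A-module, and N, H submodules of M with N ⊓ H = ⊥, N ⊔ H = ⊤, and N distributive (a lattice decomposition M = N ⊕ H). Let E₁ and E₂ be injective A-modules and suppose there are injective A-linear maps N → E₁ and H → E₂ whose ranges are essential submodules of E₁ and E₂ respectively. Then in the product module E₁ × E₂, the submodule E₁ × {0} is distributive (with complement {0} × E₂), i.e., E(M) = E(N) ⊕ E(H) is a lattice decomposition. -/
section Aux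

variable {A : Type*} [CommRing A] [IsNoetherianRing A]

/-- Over a noetherian ring, if the annihilator of `e` lies in a prime `q`, there is an
element whose annihilator is a prime contained in `q`. -/
lemma exists_prime_torsionOf_le {E : Type*} [AddCommGroup E] [Module A E]
    (q : Ideal A) (hq : q.IsPrime) (e : E) (he : Ideal.torsionOf A E e ≤ q) :
    ∃ x : E, (Ideal.torsionOf A E x).IsPrime ∧ Ideal.torsionOf A E x ≤ q := by
  set S : Set (Ideal A) := {I | I ≤ q ∧ ∃ x : E, I = Ideal.torsionOf A E x} with hS
  have hSne : S.Nonempty := ⟨Ideal.torsionOf A E e, he, e, rfl⟩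
  obtain ⟨p, hpS, hmax⟩ :=
    (set_has_maximal_iff_noetherian.mpr (inferInstance : IsNoetherian A A)) S hSne
  obtain ⟨hpq, x, rfl⟩ := hpS
  refine ⟨x, ⟨?_, ?_⟩, hpq⟩
  · intro htop
    exact hq.ne_top (eq_top_iff.mpr (htop ▸ hpq : (⊤ : Ideal A) ≤ q))
  · intro a b hab
    by_contra hcon
    push_neg at hcon
    obtain ⟨ha, hb⟩ := hcon
    rw [Ideal.mem_torsionOf_iff, mul_smul] at hab
    by_cases hbx : Ideal.torsionOf A E (b • x) ≤ q
    · have hmem : Ideal.torsionOf A E (b • x) ∈ S := ⟨hbx, b • x, rfl⟩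
      have hle : Ideal.torsionOf A E x ≤ Ideal.torsionOf A E (b • x) := by
        intro u hu
        rw [Ideal.mem_torsionOf_iff] at hu ⊢
        rw [smul_comm, hu, smul_zero]
      have heq : Ideal.torsionOf A E x = Ideal.torsionOf A E (b • x) := by
        by_contra hne
        exact hmax _ hmem (lt_of_le_of_ne hle hne)
      exact ha (heq ▸ (Ideal.mem_torsionOf_iff _ _).mpr hab)
    · obtain ⟨s, hs, hsq⟩ := SetLike.not_le_iff_exists.mp hbx
      rw [Ideal.mem_torsionOf_iff] at hs
      have hsxq : Ideal.torsionOf A E (s • x) ≤ q := by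
        intro u hu
        rw [Ideal.mem_torsionOf_iff, smul_smul] at hu
        have : u * s ∈ Ideal.torsionOf A E x := (Ideal.mem_torsionOf_iff _ _).mpr hu
        rcases hq.mem_or_mem (hpq this) with h | h
        · exact h
        · exact absurd h hsq
      have hmem : Ideal.torsionOf A E (s • x) ∈ S := ⟨hsxq, s • x, rfl⟩
      have hle : Ideal.torsionOf A E x ≤ Ideal.torsionOf A E (s • x) := by
        intro u hu
        rw [Ideal.mem_torsionOf_iff] at hu ⊢
        rw [smul_comm, hu, smul_zero]
      have heq : Ideal.torsionOf A E x = Ideal.torsionOf A E (s • x) := by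
        by_contra hne
        exact hmax _ hmem (lt_of_le_of_ne hle hne)
      have hbmem : b ∈ Ideal.torsionOf A E (s • x) := by
        rw [Ideal.mem_torsionOf_iff, smul_comm]
        exact hs
      exact hb (heq ▸ hbmem)

/-- Transfer a prime-bounded annihilator from an essential extension down to the submodule. -/
lemma exists_range_torsionOf_le {E W : Type*} [AddCommGroup E] [Module A E]
    [AddCommGroup W] [Module A W]
    (f : W →ₗ[A] E) (hfe : ∀ X : Submodule A E, X ≠ ⊥ → LinearMap.range f ⊓ X ≠ ⊥)
    (q : Ideal A) (hq : q.IsPrime) (e : E) (he : Ideal.torsionOf A E e ≤ q) :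
    ∃ w : W, Ideal.torsionOf A E (f w) ≤ q := by
  obtain ⟨x, hxp, hxq⟩ := exists_prime_torsionOf_le q hq e he
  have hx0 : x ≠ 0 := by
    intro h
    rw [h, Ideal.torsionOf_zero] at hxp
    exact hxp.ne_top rfl
  have hspan : (Submodule.span A {x} : Submodule A E) ≠ ⊥ := by
    simpa [Submodule.span_singleton_eq_bot] using hx0
  obtain ⟨v, hv, hv0⟩ := Submodule.ne_bot_iff _ |>.mp (hfe _ hspan)
  obtain ⟨hvr, hvs⟩ := Submodule.mem_inf.mp hv
  obtain ⟨a, rfl⟩ := Submodule.mem_span_singleton.mp hvs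
  obtain ⟨w, hw⟩ := hvr
  refine ⟨w, ?_⟩
  rw [hw]
  intro u hu
  rw [Ideal.mem_torsionOf_iff, smul_smul] at hu
  have hua : u * a ∈ Ideal.torsionOf A E x := (Ideal.mem_torsionOf_iff _ _).mpr hu
  rcases hxp.mem_or_mem hua with h | h
  · exact hxq h
  · exfalso
    exact hv0 ((Ideal.mem_torsionOf_iff _ _).mp h)

end Aux

/-- Over a commutative noetherian ring, a lattice decomposition `M = N ⊕ H` induces a lattice
decomposition `E(M) = E(N) ⊕ E(H)` of injective hulls. -/
theorem injectiveHull_lattice_decomposition {A M E₁ E₂ : Type*} [CommRing A]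
    [IsNoetherianRing A] [AddCommGroup M] [Module A M]
    [AddCommGroup E₁] [Module A E₁] [AddCommGroup E₂] [Module A E₂]
    (N H : Submodule A M) (hdisj : N ⊓ H = ⊥) (hsup : N ⊔ H = ⊤)
    (hdist : IsDistribSubmodule N)
    (hE₁ : Module.Injective A E₁) (hE₂ : Module.Injective A E₂)
    (f : N →ₗ[A] E₁) (hf : Function.Injective f)
    (hfe : ∀ X : Submodule A E₁, X ≠ ⊥ → LinearMap.range f ⊓ X ≠ ⊥)
    (g : H →ₗ[A] E₂) (hg : Function.Injective g)
    (hge : ∀ X : Submodule A E₂, X ≠ ⊥ → LinearMap.range g ⊓ X ≠ ⊥) :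
    IsDistribSubmodule (Submodule.fst A E₁ E₂) := by
  have hmemfst : ∀ v : E₁ × E₂, v ∈ Submodule.fst A E₁ E₂ ↔ v.2 = 0 := by
    intro v
    simp [Submodule.fst, Submodule.mem_comap]
  -- every submodule of M splits along N ⊕ H
  have hsplit : ∀ Y : Submodule A M, Y = (Y ⊓ N) ⊔ (Y ⊓ H) := by
    intro Y
    have h1 : N ⊔ (Y ⊓ H) = N ⊔ Y := by
      rw [hdist Y H, hsup, inf_top_eq]
    have h2 : Y = Y ⊓ (N ⊔ (Y ⊓ H)) := by
      rw [h1, inf_of_le_left le_sup_right]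
    calc Y = Y ⊓ (N ⊔ (Y ⊓ H)) := h2
      _ = Y ⊓ ((Y ⊓ H) ⊔ N) := by rw [sup_comm]
      _ = ((Y ⊓ H) ⊔ N) ⊓ Y := by rw [inf_comm]
      _ = (Y ⊓ H) ⊔ (N ⊓ Y) := sup_inf_assoc_of_le N inf_le_left
      _ = (Y ⊓ N) ⊔ (Y ⊓ H) := by rw [sup_comm, inf_comm N Y]
  -- key consequence: annihilators of an N-element and an H-element are comaximal
  have hkey : ∀ (n : N) (h : H) (q : Ideal A), q.IsPrime →
      Ideal.torsionOf A M (n : M) ≤ q → Ideal.torsionOf A M (h : M) ≤ q → False := by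
    intro n h q hq hnq hhq
    set Y : Submodule A M := Submodule.span A {(n : M) + (h : M)} with hY
    have hmem : (n : M) + (h : M) ∈ Y := Submodule.mem_span_singleton_self _
    rw [hsplit Y] at hmem
    obtain ⟨u, hu, v, hv, huv⟩ := Submodule.mem_sup.mp hmem
    obtain ⟨huY, huN⟩ := Submodule.mem_inf.mp hu
    obtain ⟨hvY, hvH⟩ := Submodule.mem_inf.mp hv
    have hnu : (n : M) = u := by
      have hdiff : (n : M) - u ∈ N ⊓ H := by
        constructor
        · exact Submodule.sub_mem N n.2 huN
        · have : (n : M) - u = v - (h : M) := by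
            rw [sub_eq_sub_iff_add_eq_add, add_comm v u]
            exact huv.symm
          rw [this]
          exact Submodule.sub_mem H hvH h.2
      rw [hdisj, Submodule.mem_bot] at hdiff
      exact sub_eq_zero.mp hdiff
    have hnY : (n : M) ∈ Y := hnu ▸ huY
    obtain ⟨a, ha⟩ := Submodule.mem_span_singleton.mp hnY
    -- a • (n + h) = n : hence (1-a) • n = a • h ∈ N ⊓ H = ⊥
    have hsmul : (1 - a) • (n : M) - a • (h : M) = 0 := by
      have : a • ((n : M) + (h : M)) = (n : M) := ha
      rw [sub_smul, one_smul, smul_add] at *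
      linear_combination (norm := module) -this
    have hNH : (1 - a) • (n : M) ∈ N ⊓ H := by
      constructor
      · exact Submodule.smul_mem N _ n.2
      · have : (1 - a) • (n : M) = a • (h : M) := by
          rw [← sub_eq_zero]; exact hsmul
        rw [this]
        exact Submodule.smul_mem H _ h.2
    rw [hdisj, Submodule.mem_bot] at hNH
    have h1q : (1 : A) ∈ q := by
      have h1 : (1 - a) ∈ Ideal.torsionOf A M (n : M) :=
        (Ideal.mem_torsionOf_iff _ _).mpr hNH
      have h2 : a ∈ Ideal.torsionOf A M (h : M) := by
        rw [Ideal.mem_torsionOf_iff]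
        have : a • (h : M) = (1 - a) • (n : M) := by
          rw [← sub_eq_zero, ← neg_sub ((1-a) • (n:M)), neg_eq_zero]; exact hsmul
        rw [this, hNH]
      have := q.add_mem (hnq h1) (hhq h2)
      simpa using this
    exact hq.ne_top (Ideal.eq_top_of_isUnit_mem q h1q isUnit_one)
  -- every submodule of E₁ × E₂ splits
  have hsplitE : ∀ (Y : Submodule A (E₁ × E₂)) (v : E₁ × E₂), v ∈ Y → (v.1, 0) ∈ Y := by
    intro Y v hv
    by_contra hcon
    have htop : Ideal.torsionOf A E₁ v.1 + Ideal.torsionOf A E₂ v.2 ≠ ⊤ := by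
      intro htop
      obtain ⟨a, ha, b, hb, hab⟩ := Submodule.mem_sup.mp (htop ▸ Submodule.mem_top :
        (1 : A) ∈ Ideal.torsionOf A E₁ v.1 + Ideal.torsionOf A E₂ v.2)
      rw [Ideal.mem_torsionOf_iff] at ha hb
      have hb1 : b • v.1 = v.1 := by
        have hba : b = 1 - a := by rw [← hab]; ring
        rw [hba, sub_smul, one_smul, ha, sub_zero]
      have hbv : b • v = (v.1, (0 : E₂)) := by
        ext
        · simpa using hb1
        · simpa using hb
      exact hcon (hbv ▸ Submodule.smul_mem Y b hv)
    obtain ⟨q, hqmax, hq⟩ := Ideal.exists_le_maximal _ htop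
    have hq1 : Ideal.torsionOf A E₁ v.1 ≤ q := le_trans le_sup_left hq
    have hq2 : Ideal.torsionOf A E₂ v.2 ≤ q := le_trans le_sup_right hq
    obtain ⟨n, hn⟩ := exists_range_torsionOf_le f hfe q hqmax.isPrime v.1 hq1
    obtain ⟨h, hh⟩ := exists_range_torsionOf_le g hge q hqmax.isPrime v.2 hq2
    have hnM : Ideal.torsionOf A M (n : M) ≤ q := by
      intro u hu
      apply hn
      rw [Ideal.mem_torsionOf_iff] at hu ⊢
      rw [← map_smul]
      have : u • n = 0 := by
        have : ((u • n : N) : M) = 0 := by rw [Submodule.coe_smul]; exact hu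
        exact_mod_cast Subtype.ext this
      rw [this, map_zero]
    have hhM : Ideal.torsionOf A M (h : M) ≤ q := by
      intro u hu
      apply hh
      rw [Ideal.mem_torsionOf_iff] at hu ⊢
      rw [← map_smul]
      have : u • h = 0 := by
        have : ((u • h : H) : M) = 0 := by rw [Submodule.coe_smul]; exact hu
        exact_mod_cast Subtype.ext this
      rw [this, map_zero]
    exact hkey n h q hqmax.isPrime hnM hhM
  -- conclude distributivity
  intro Y₁ Y₂
  apply le_antisymm
  · exact le_inf (sup_le_sup_left inf_le_left _) (sup_le_sup_left inf_le_right _)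
  · intro v hv
    obtain ⟨hv1, hv2⟩ := Submodule.mem_inf.mp hv
    obtain ⟨w₁, hw₁, u₁, hu₁, hwu₁⟩ := Submodule.mem_sup.mp hv1
    obtain ⟨w₂, hw₂, u₂, hu₂, hwu₂⟩ := Submodule.mem_sup.mp hv2
    rw [hmemfst] at hw₁ hw₂
    have hu₁2 : u₁.2 = v.2 := by
      have := congrArg Prod.snd hwu₁
      simpa [hw₁] using this
    have hu₂2 : u₂.2 = v.2 := by
      have := congrArg Prod.snd hwu₂
      simpa [hw₂] using this
    have hy₁ : ((0 : E₁), v.2) ∈ Y₁ := by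
      have h1 : (u₁.1, (0 : E₂)) ∈ Y₁ := hsplitE Y₁ u₁ hu₁
      have : u₁ - (u₁.1, 0) ∈ Y₁ := Submodule.sub_mem Y₁ hu₁ h1
      have heq : u₁ - (u₁.1, (0:E₂)) = ((0 : E₁), v.2) := by
        ext <;> simp [hu₁2]
      rwa [heq] at this
    have hy₂ : ((0 : E₁), v.2) ∈ Y₂ := by
      have h1 : (u₂.1, (0 : E₂)) ∈ Y₂ := hsplitE Y₂ u₂ hu₂
      have : u₂ - (u₂.1, 0) ∈ Y₂ := Submodule.sub_mem Y₂ hu₂ h1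
      have heq : u₂ - (u₂.1, (0:E₂)) = ((0 : E₁), v.2) := by
        ext <;> simp [hu₂2]
      rwa [heq] at this
    refine Submodule.mem_sup.mpr ⟨(v.1, 0), ?_, ((0 : E₁), v.2), ⟨hy₁, hy₂⟩, ?_⟩
    · rw [hmemfst]
    · ext <;> simp
end

section
/- Let R be a ring, M a right R-module, and e : M → M an R-linear endomorphism with e ∘ e = e; set N := range(e) (so N is a direct summand of M with complement ker(e)). Then the following are equivalent: (a) N is a distributive submodule of M; (b) e is central in the endomorphism ring of M (e ∘ f = f ∘ e for every R-linear endomorphism f of M) and e(X) ⊆ X for every submodule X of M. -/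
/-- For an idempotent endomorphism `e` of `M` with `N = e(M)`, the direct summand `N` is
distributive iff `e` is central in `End_R(M)` and stabilizes every submodule of `M`. -/
theorem isDistribSubmodule_range_iff_central_fullyInvariant {R M : Type*} [Ring R]
    [AddCommGroup M] [Module Rᵐᵒᵖ M] (e : M →ₗ[Rᵐᵒᵖ] M) (he : e ∘ₗ e = e) :
    IsDistribSubmodule (LinearMap.range e) ↔
      ((∀ f : M →ₗ[Rᵐᵒᵖ] M, e ∘ₗ f = f ∘ₗ e) ∧
        ∀ X : Submodule Rᵐᵒᵖ M, Submodule.map e X ≤ X) := by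
  have hee : ∀ x, e (e x) = e x := fun x => DFunLike.congr_fun he x
  have hfix : ∀ n ∈ LinearMap.range e, e n = n := by
    rintro _ ⟨m, rfl⟩; exact hee m
  constructor
  · intro hd
    -- Step 1: e stabilizes every submodule.
    have hstab : ∀ X : Submodule Rᵐᵒᵖ M, Submodule.map e X ≤ X := by
      intro X
      rintro _ ⟨x, hx, rfl⟩
      -- it suffices that e x ∈ span {x}
      have hsup : LinearMap.range e ⊔ LinearMap.ker e = ⊤ := by
        rw [eq_top_iff]
        intro y _
        rw [Submodule.mem_sup]
        exact ⟨e y, ⟨y, rfl⟩, y - e y, by simp [LinearMap.mem_ker, map_sub, hee], by abel⟩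
      have h1 : x ∈ LinearMap.range e ⊔ (Submodule.span Rᵐᵒᵖ {x} ⊓ LinearMap.ker e) := by
        rw [hd, hsup, inf_top_eq]
        exact Submodule.mem_sup_right (Submodule.mem_span_singleton_self x)
      rw [Submodule.mem_sup] at h1
      obtain ⟨n, hn, k, hk, hnk⟩ := h1
      have hek : e k = 0 := hk.2
      have hexn : e x = n := by
        have h2 := congrArg e hnk
        rw [map_add, hfix n hn, hek, add_zero] at h2
        exact h2.symm
      have hxX : x ∈ Submodule.span Rᵐᵒᵖ {x} := Submodule.mem_span_singleton_self x
      have hnspan : n ∈ Submodule.span Rᵐᵒᵖ {x} := by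
        have : n = x - k := by rw [← hnk]; abel
        rw [this]
        exact sub_mem hxX hk.1
      have hspanle : Submodule.span Rᵐᵒᵖ {x} ≤ X := by
        rw [Submodule.span_le, Set.singleton_subset_iff]; exact hx
      rw [hexn]
      exact hspanle hnspan
    refine ⟨?_, hstab⟩
    -- Step 2: centrality from stabilization.
    intro f
    -- part (a): (1-e) f e = 0
    have hg : ∀ x, f (e x) - e (f (e x)) = 0 := by
      intro x
      set p : M →ₗ[Rᵐᵒᵖ] M := e + (f ∘ₗ e - e ∘ₗ f ∘ₗ e) with hp
      have hpx : ∀ y, p y = e y + (f (e y) - e (f (e y))) := by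
        intro y; simp [hp]
      have hep : ∀ y, e (p y) = e y := by
        intro y
        rw [hpx, map_add, map_sub, hee, hee]
        abel
      have h1 : e (p x) ∈ LinearMap.range p :=
        hstab (LinearMap.range p) ⟨p x, LinearMap.mem_range_self p x, rfl⟩
      obtain ⟨z, hz⟩ := h1
      rw [hep x] at hz
      have hez : e z = e x := by
        have h2 := congrArg e hz
        rw [hep z, hee] at h2
        exact h2
      have h3 : e z + (f (e z) - e (f (e z))) = e x := by rw [← hpx]; exact hz
      rw [hez] at h3
      exact (add_eq_left).mp h3
    -- part (b): e f (1-e) = 0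
    have hh : ∀ x, e (f x) - e (f (e x)) = 0 := by
      intro x
      set q : M →ₗ[Rᵐᵒᵖ] M := e + (e ∘ₗ f - e ∘ₗ f ∘ₗ e) with hq
      have hqx : ∀ y, q y = e y + (e (f y) - e (f (e y))) := by
        intro y; simp [hq]
      set k : M := x - e x with hkdef
      have hek : e k = 0 := by rw [hkdef, map_sub, hee, sub_self]
      have h2 : e (k - e (f k)) = -e (f k) := by
        rw [map_sub, hek, hee, zero_sub]
      -- the element k - e(f k) lies in ker q
      have hmem : k - e (f k) ∈ LinearMap.ker q := by
        have e3 : e (f (k - e (f k))) = e (f k) - e (f (e (f k))) := by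
          rw [map_sub f, map_sub e]
        have e4 : e (f (-e (f k))) = -e (f (e (f k))) := by
          rw [map_neg f, map_neg e]
        rw [LinearMap.mem_ker, hqx, h2, e3, e4]
        abel
      have h1 : e (k - e (f k)) ∈ LinearMap.ker q :=
        hstab (LinearMap.ker q) ⟨k - e (f k), hmem, rfl⟩
      rw [h2, LinearMap.mem_ker] at h1
      have h5 : q (-e (f k)) = -e (f k) := by
        rw [hqx]
        simp only [map_neg, hee]
        abel
      rw [h5] at h1
      have h3 : e (f k) = 0 := by simpa using h1
      have hk2 : e (f k) = e (f x) - e (f (e x)) := by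
        rw [hkdef, map_sub, map_sub]
      rw [← hk2, h3]
    ext x
    have h1 := hh x
    have h2 := hg x
    have h3 : e (f x) = e (f (e x)) := by rwa [sub_eq_zero] at h1
    have h4 : f (e x) = e (f (e x)) := by rwa [sub_eq_zero] at h2
    simp only [LinearMap.comp_apply]
    rw [h3, ← h4]
  · rintro ⟨-, hstab⟩
    intro Y₁ Y₂
    refine le_antisymm (le_inf (sup_le_sup_left inf_le_left _)
      (sup_le_sup_left inf_le_right _)) ?_
    intro x hx
    rw [Submodule.mem_inf] at hx
    obtain ⟨hx1, hx2⟩ := hx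
    rw [Submodule.mem_sup] at hx1 hx2
    obtain ⟨n₁, hn₁, y₁, hy₁, h₁⟩ := hx1
    obtain ⟨n₂, hn₂, y₂, hy₂, h₂⟩ := hx2
    have key : ∀ (n y : M), n ∈ LinearMap.range e → n + y = x → x - e x = y - e y := by
      intro n y hn hxy
      have h2 := congrArg e hxy
      rw [map_add, hfix n hn] at h2
      calc x - e x = (n + y) - (n + e y) := by rw [hxy, h2]
        _ = y - e y := by abel
    have hmem1 : x - e x ∈ Y₁ := by
      rw [key n₁ y₁ hn₁ h₁]
      exact sub_mem hy₁ (hstab Y₁ ⟨y₁, hy₁, rfl⟩)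
    have hmem2 : x - e x ∈ Y₂ := by
      rw [key n₂ y₂ hn₂ h₂]
      exact sub_mem hy₂ (hstab Y₂ ⟨y₂, hy₂, rfl⟩)
    rw [Submodule.mem_sup]
    exact ⟨e x, ⟨x, rfl⟩, x - e x, ⟨hmem1, hmem2⟩, by abel⟩
end

section
/- Let R be a ring, M a right R-module, and N a complemented distributive submodule of M (i.e., N is distributive and has a complement H with N ⊓ H = ⊥, N ⊔ H = ⊤). Then N is stable under every R-linear endomorphism of M: f(N) ⊆ N for all f : M → M R-linear, i.e., N is a fully invariant submodule. -/
/-- Every complemented distributive submodule `N ⊆ M` is stable under every endomorphism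
of `M`, i.e., it is fully invariant. -/
theorem complemented_distrib_fullyInvariant {R M : Type*} [Ring R] [AddCommGroup M]
    [Module Rᵐᵒᵖ M] (N : Submodule Rᵐᵒᵖ M) (hdist : IsDistribSubmodule N)
    (H : Submodule Rᵐᵒᵖ M) (hdisj : N ⊓ H = ⊥) (hsup : N ⊔ H = ⊤) :
    ∀ f : M →ₗ[Rᵐᵒᵖ] M, Submodule.map f N ≤ N := by
  intro f
  have hcompl : IsCompl N H :=
    ⟨disjoint_iff.2 hdisj, codisjoint_iff.2 hsup⟩
  -- g = projection onto H along N, composed with f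
  set g : M →ₗ[Rᵐᵒᵖ] M := H.subtype ∘ₗ (H.linearProjOfIsCompl N hcompl.symm) ∘ₗ f with hg
  have hgH : ∀ x : M, g x ∈ H := fun x => (H.linearProjOfIsCompl N hcompl.symm (f x)).2
  set Y : Submodule Rᵐᵒᵖ M := Submodule.map (LinearMap.id + g) N with hY
  -- Y ⊓ H = ⊥
  have hYH : Y ⊓ H = ⊥ := by
    rw [eq_bot_iff]
    rintro y ⟨⟨x, hxN, rfl⟩, hyH⟩
    simp only [LinearMap.add_apply, LinearMap.id_apply] at hyH ⊢
    have hxH : x ∈ H := by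
      have : x = (x + g x) - g x := by abel
      rw [this]; exact sub_mem hyH (hgH x)
    have hx0 : x = 0 := by
      have : x ∈ N ⊓ H := ⟨hxN, hxH⟩
      rwa [hdisj, Submodule.mem_bot] at this
    simp [hx0]
  -- distributivity gives Y ≤ N
  have hYN : Y ≤ N := by
    have := hdist Y H
    rw [hYH, hsup, sup_bot_eq, inf_top_eq] at this
    exact le_sup_right.trans this.ge
  -- conclude
  rintro y ⟨x, hxN, rfl⟩
  have hgx : g x ∈ N := by
    have hmem : x + g x ∈ Y := ⟨x, hxN, rfl⟩
    have : g x = (x + g x) - x := by abel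
    rw [this]; exact sub_mem (hYN hmem) hxN
  have hgx0 : g x = 0 := by
    have : g x ∈ N ⊓ H := ⟨hgx, hgH x⟩
    rwa [hdisj, Submodule.mem_bot] at this
  have hdecomp : (N.linearProjOfIsCompl H hcompl (f x) : M) + (H.linearProjOfIsCompl N hcompl.symm (f x) : M) = f x :=
    Submodule.projection_add_projection_eq_self hcompl (f x)
  have hg' : (H.linearProjOfIsCompl N hcompl.symm (f x) : M) = 0 := hgx0
  rw [hg', add_zero] at hdecomp
  rw [← hdecomp]
  exact (N.linearProjOfIsCompl H hcompl (f x)).2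
end

section
/- Let R be a ring and e ∈ R an idempotent (e·e = e). Then the right ideal e·R is a distributive submodule of R regarded as a right R-module if and only if e is central in R (note e·R is always complemented by (1-e)·R). Moreover, for any two-sided ideals a, b of R with a ⊓ b = ⊥ and a ⊔ b = ⊤ as right ideals (R = a ⊕ b), the right ideal a is a distributive submodule of R, i.e., every such decomposition of R into two-sided ideals is a lattice decomposition. -/
private lemma mem_span_op {R : Type*} [Ring R] (x y : R) :
    x ∈ Submodule.span Rᵐᵒᵖ ({y} : Set R) ↔ ∃ t : R, y * t = x := by
  rw [Submodule.mem_span_singleton]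
  constructor
  · rintro ⟨a, rfl⟩; exact ⟨a.unop, rfl⟩
  · rintro ⟨t, rfl⟩; exact ⟨MulOpposite.op t, rfl⟩

private lemma aux_two_sided {R : Type*} [Ring R] (a b : Submodule Rᵐᵒᵖ R)
    (ha : ∀ r x : R, x ∈ a → r * x ∈ a) (hb : ∀ r x : R, x ∈ b → r * x ∈ b)
    (hinf : a ⊓ b = ⊥) (hsup : a ⊔ b = ⊤) : IsDistribSubmodule a := by
  have hzero : ∀ x : R, x ∈ a → x ∈ b → x = 0 := by
    intro x hxa hxb
    have : x ∈ a ⊓ b := ⟨hxa, hxb⟩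
    rw [hinf] at this
    exact this
  obtain ⟨f, hf, g, hg, hfg⟩ :=
    Submodule.mem_sup.mp (show (1 : R) ∈ a ⊔ b by rw [hsup]; trivial)
  -- g is central
  have hgc : ∀ r : R, g * r = r * g := by
    intro r
    have h1 : g * r * f = 0 := by
      refine hzero _ (ha (g * r) f hf) ?_
      have : g * (r * f) ∈ b := by
        simpa using b.smul_mem (MulOpposite.op (r * f)) hg
      simpa [mul_assoc] using this
    have h2 : f * r * g = 0 := by
      refine hzero _ ?_ (hb (f * r) g hg)
      have : f * (r * g) ∈ a := by
        simpa using a.smul_mem (MulOpposite.op (r * g)) hf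
      simpa [mul_assoc] using this
    have e1 : g * r = g * r * f + g * r * g := by
      rw [← mul_add, hfg, mul_one]
    have e2 : r * g = f * r * g + g * r * g := by
      rw [← add_mul, ← add_mul]
      have : (f + g) * r = r := by rw [hfg, one_mul]
      rw [this]
    rw [e1, e2, h1, h2]
  intro Y₁ Y₂
  refine le_antisymm (le_inf (sup_le_sup_left inf_le_left _)
    (sup_le_sup_left inf_le_right _)) ?_
  rintro x ⟨hx1, hx2⟩
  obtain ⟨a₁, ha₁, y₁, hy₁, hxe1⟩ := Submodule.mem_sup.mp hx1
  obtain ⟨a₂, ha₂, y₂, hy₂, hxe2⟩ := Submodule.mem_sup.mp hx2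
  have key : ∀ a' y' : R, a' ∈ a → g * (a' + y') = g * y' := by
    intro a' y' ha'
    have hga' : g * a' = 0 := by
      refine hzero _ (ha g a' ha') ?_
      simpa using b.smul_mem (MulOpposite.op a') hg
    rw [mul_add, hga', zero_add]
  have hgx1 : g * x = g * y₁ := by rw [← hxe1]; exact key _ _ ha₁
  have hgx2 : g * x = g * y₂ := by rw [← hxe2]; exact key _ _ ha₂
  have hgY : g * x ∈ Y₁ ⊓ Y₂ := by
    constructor
    · rw [hgx1, hgc y₁]
      simpa using Y₁.smul_mem (MulOpposite.op g) hy₁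
    · rw [hgx2, hgc y₂]
      simpa using Y₂.smul_mem (MulOpposite.op g) hy₂
  have hfx : f * x ∈ a := by
    simpa using a.smul_mem (MulOpposite.op x) hf
  refine Submodule.mem_sup.mpr ⟨f * x, hfx, g * x, hgY, ?_⟩
  rw [← add_mul, hfg, one_mul]

/-- For an idempotent `e ∈ R`, the right ideal `eR` is a complemented distributive submodule of
`R` (as right `R`-module) iff `e` is central; moreover every direct sum decomposition
`R = a ⊕ b` into two-sided ideals is a lattice decomposition. -/
theorem idempotent_lattice_decomposition {R : Type*} [Ring R] (e : R) (he : e * e = e) :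
    (IsDistribSubmodule (Submodule.span Rᵐᵒᵖ ({e} : Set R)) ↔ ∀ r : R, e * r = r * e) ∧
    (∀ a b : Submodule Rᵐᵒᵖ R,
      (∀ r x : R, x ∈ a → r * x ∈ a) → (∀ r x : R, x ∈ b → r * x ∈ b) →
      a ⊓ b = ⊥ → a ⊔ b = ⊤ → IsDistribSubmodule a) := by
  set f : R := 1 - e with hfdef
  have hef : e * f = 0 := by rw [hfdef, mul_sub, mul_one, he, sub_self]
  have hfe : f * e = 0 := by rw [hfdef, sub_mul, one_mul, he, sub_self]
  have hff : f * f = f := by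
    nth_rewrite 2 [hfdef]
    rw [mul_sub, mul_one, hfe, sub_zero]
  have hef' : e + f = 1 := by rw [hfdef]; abel
  constructor
  · constructor
    · -- distributive → central
      intro hdist r
      have htop : Submodule.span Rᵐᵒᵖ ({e} : Set R) ⊔ Submodule.span Rᵐᵒᵖ ({f} : Set R) = ⊤ := by
        rw [eq_top_iff]
        intro x _
        refine Submodule.mem_sup.mpr ⟨e * x, (mem_span_op _ _).mpr ⟨x, rfl⟩,
          f * x, (mem_span_op _ _).mpr ⟨x, rfl⟩, by rw [← add_mul, hef', one_mul]⟩
      -- key extraction from distributivity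
      have decomp : ∀ g : R, ∃ t : R, f * g = g * t ∧ e * (g * t) = 0 := by
        intro g
        have hd := hdist (Submodule.span Rᵐᵒᵖ ({f} : Set R))
          (Submodule.span Rᵐᵒᵖ ({g} : Set R))
        rw [htop, top_inf_eq] at hd
        have hgmem : g ∈ Submodule.span Rᵐᵒᵖ ({e} : Set R) ⊔
            (Submodule.span Rᵐᵒᵖ ({f} : Set R) ⊓ Submodule.span Rᵐᵒᵖ ({g} : Set R)) := by
          rw [hd]
          exact Submodule.mem_sup_right (Submodule.subset_span rfl)
        obtain ⟨n, hn, w, hw, hgeq⟩ := Submodule.mem_sup.mp hgmem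
        obtain ⟨s, hs⟩ := (mem_span_op _ _).mp hn
        obtain ⟨t₁, ht₁⟩ := (mem_span_op _ _).mp hw.1
        obtain ⟨t₂, ht₂⟩ := (mem_span_op _ _).mp hw.2
        refine ⟨t₂, ?_, ?_⟩
        · -- f * g = w = g * t₂
          rw [ht₂]
          calc f * g = f * (n + w) := by rw [hgeq]
            _ = f * n + f * w := by rw [mul_add]
            _ = 0 + f * w := by rw [← hs, ← mul_assoc, hfe, zero_mul]
            _ = f * (f * t₁) := by rw [zero_add, ht₁]
            _ = f * t₁ := by rw [← mul_assoc, hff]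
            _ = w := ht₁
        · rw [ht₂, ← ht₁, ← mul_assoc, hef, zero_mul]
      -- Step A : f * r * e = 0
      have stepA : f * r * e = 0 := by
        obtain ⟨t, h1, h2⟩ := decomp (e + f * r * e)
        have hfg : f * (e + f * r * e) = f * r * e := by
          rw [mul_add, hfe, zero_add, ← mul_assoc, ← mul_assoc, hff]
        have hexp : (e + f * r * e) * t = e * t + f * r * (e * t) := by
          rw [add_mul, mul_assoc (f * r) e t]
        have het : e * t = 0 := by
          have h3 : e * ((e + f * r * e) * t) = e * t := by
            rw [hexp, mul_add, ← mul_assoc e e t, he, ← mul_assoc e (f * r) (e * t),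
              ← mul_assoc e f r, hef, zero_mul, zero_mul, add_zero]
          rw [← h3, h2]
        have : (e + f * r * e) * t = 0 := by
          rw [hexp, het, mul_zero, add_zero]
        rw [hfg] at h1
        rw [h1, this]
      -- Step B : e * r * f = 0
      have stepB : e * r * f = 0 := by
        obtain ⟨t, h1, h2⟩ := decomp (f + e * r * f)
        have hfg : f * (f + e * r * f) = f := by
          rw [mul_add, hff, ← mul_assoc, ← mul_assoc, hfe, zero_mul, zero_mul, add_zero]
        have hexp : (f + e * r * f) * t = f * t + e * r * (f * t) := by
          rw [add_mul, mul_assoc (e * r) f t]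
        rw [hfg] at h1
        -- h1 : f = (f + e*r*f) * t
        have herft : e * r * (f * t) = 0 := by
          have h3 : e * ((f + e * r * f) * t) = e * r * (f * t) := by
            rw [hexp, mul_add, ← mul_assoc e f t, hef, zero_mul, zero_add,
              ← mul_assoc e (e * r) (f * t), ← mul_assoc e e r, he]
          rw [← h3, ← h1]
          exact hef
        have hft : f = f * t := by
          nth_rewrite 1 [h1]
          rw [hexp, herft, add_zero]
        calc e * r * f = e * r * (f * t) := by rw [← hft]
          _ = 0 := herft
      -- conclude
      have h1 : e * r = e * r * e := by
        have h := stepB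
        rw [hfdef, mul_sub, mul_one, sub_eq_zero] at h
        exact h
      have h2 : r * e = e * r * e := by
        have h := stepA
        rw [hfdef, sub_mul, sub_mul, one_mul, sub_eq_zero] at h
        exact h
      rw [h1]
      exact h2.symm
    · -- central → distributive, via aux_two_sided
      intro hc
      refine aux_two_sided _ (Submodule.span Rᵐᵒᵖ ({f} : Set R)) ?_ ?_ ?_ ?_
      · intro r x hx
        obtain ⟨t, rfl⟩ := (mem_span_op _ _).mp hx
        exact (mem_span_op _ _).mpr ⟨r * t, by rw [← mul_assoc, hc r, mul_assoc]⟩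
      · intro r x hx
        obtain ⟨t, rfl⟩ := (mem_span_op _ _).mp hx
        have hfc : f * r = r * f := by
          rw [hfdef, sub_mul, mul_sub, one_mul, mul_one, hc r]
        exact (mem_span_op _ _).mpr ⟨r * t, by rw [← mul_assoc, hfc, mul_assoc]⟩
      · rw [eq_bot_iff]
        rintro x ⟨h1, h2⟩
        obtain ⟨s, hs⟩ := (mem_span_op _ _).mp h1
        obtain ⟨t, ht⟩ := (mem_span_op _ _).mp h2
        have hx1 : e * x = x := by rw [← hs, ← mul_assoc, he]
        have hx2 : e * x = 0 := by rw [← ht, ← mul_assoc, hef, zero_mul]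
        have : x = 0 := by rw [← hx1, hx2]
        simp [this]
      · rw [eq_top_iff]
        intro x _
        refine Submodule.mem_sup.mpr ⟨e * x, (mem_span_op _ _).mpr ⟨x, rfl⟩,
          f * x, (mem_span_op _ _).mpr ⟨x, rfl⟩, by rw [← add_mul, hef', one_mul]⟩
  · intro a b ha hb hinf hsup
    exact aux_two_sided a b ha hb hinf hsup
end

section
/- Let A be a commutative ring, M an A-module, and N a submodule of M. Then the following are equivalent: (a) N is a complemented distributive submodule of M; (b) there exists an A-linear endomorphism e : M → M with e ∘ e = e, range(e) = N, e central in the endomorphism ring of M, and e belonging to the closure of the image of A in End_A(M) in the finite topology, i.e., for every finite list of elements m₁, …, m_t ∈ M there exists a ∈ A such that e(mᵢ) = a • mᵢ for all i = 1, …, t. -/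
/-- Over a commutative ring `A`, a submodule `N ⊆ M` is complemented distributive iff it is the
image of a central idempotent endomorphism lying in the closure of `A` in `End_A(M)` with
respect to the finite topology. -/
theorem complemented_distrib_iff_closure_finite_topology {A M : Type*} [CommRing A]
    [AddCommGroup M] [Module A M] (N : Submodule A M) :
    (IsDistribSubmodule N ∧ ∃ H : Submodule A M, N ⊓ H = ⊥ ∧ N ⊔ H = ⊤) ↔
      ∃ e : M →ₗ[A] M, e ∘ₗ e = e ∧ LinearMap.range e = N ∧
        (∀ f : M →ₗ[A] M, e ∘ₗ f = f ∘ₗ e) ∧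
        (∀ s : Finset M, ∃ a : A, ∀ m ∈ s, e m = a • m) := by
  classical
  constructor
  · rintro ⟨hdist, H, hdisj, hcodisj⟩
    have hc : IsCompl N H := ⟨disjoint_iff.2 hdisj, codisjoint_iff.2 hcodisj⟩
    set e : M →ₗ[A] M := N.subtype.comp (N.projectionOnto H hc) with he_def
    have heN : ∀ m, e m ∈ N := fun m => (N.projectionOnto H hc m).2
    have heL : ∀ x ∈ N, e x = x := by
      intro x hx
      exact congrArg Subtype.val
        (Submodule.projectionOnto_apply_left hc ⟨x, hx⟩)
    have heR : ∀ x ∈ H, e x = 0 := by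
      intro x hx
      simpa [he_def] using congrArg Subtype.val
        (Submodule.projectionOnto_apply_of_mem_right hc hx)
    have hsub : ∀ m, m - e m ∈ H := by
      intro m
      have h0 := Submodule.projection_add_projection_eq_self hc m
      have h3 : e m = ((N.projectionOnto H hc m : M)) := rfl
      have h2 : m - e m = ((H.projectionOnto N hc.symm m : M)) := by
        rw [h3, eq_comm, eq_sub_iff_add_eq, add_comm]
        exact h0
      rw [h2]
      exact (H.projectionOnto N hc.symm m).2
    -- key single-element lemma
    have key : ∀ n h : M, n ∈ N → h ∈ H → ∃ a : A, a • n = n ∧ a • h = 0 := by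
      intro n h hn hh
      have hdm := hdist (Submodule.span A {n + h}) H
      rw [hcodisj, inf_top_eq] at hdm
      have hhmem : h ∈ N ⊔ (Submodule.span A {n + h} ⊓ H) := by
        rw [hdm]
        exact Submodule.mem_sup.2 ⟨-n, neg_mem hn, n + h,
          Submodule.mem_span_singleton_self _, by abel⟩
      obtain ⟨y, hy, z, hz, hyz⟩ := Submodule.mem_sup.1 hhmem
      obtain ⟨c, hc'⟩ := Submodule.mem_span_singleton.1 hz.1
      have hey : y = 0 := by
        have h5 : e h = e y + e z := by rw [← hyz]; simp
        rw [heR h hh, heL y hy, heR z hz.2, add_zero] at h5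
        exact h5.symm
      have h4 : h = c • n + c • h := by
        rw [← smul_add, hc', ← hyz, hey, zero_add]
      have hcn : c • n = 0 := by
        have h1 : c • n = h - c • h := eq_sub_iff_add_eq.2 h4.symm
        have h6 : c • n ∈ N ⊓ H := ⟨Submodule.smul_mem _ _ hn,
          h1 ▸ sub_mem hh (Submodule.smul_mem _ _ hh)⟩
        rw [hdisj] at h6
        exact h6
      have hch : c • h = h := by
        have h7 := h4
        rw [hcn, zero_add] at h7
        exact h7.symm
      exact ⟨1 - c, by rw [sub_smul, one_smul, hcn, sub_zero],
        by rw [sub_smul, one_smul, hch, sub_self]⟩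
    -- lemma A : one n, finitely many h's
    have lemA : ∀ n : M, n ∈ N → ∀ t : Finset M, (∀ h ∈ t, h ∈ H) →
        ∃ a : A, a • n = n ∧ ∀ h ∈ t, a • h = 0 := by
      intro n hn t
      induction t using Finset.induction_on with
      | empty => exact fun _ => ⟨1, one_smul _ _, by simp⟩
      | @insert h₀ t' _ ih =>
        intro ht
        obtain ⟨a, ha1, ha2⟩ := ih (fun h hh => ht h (Finset.mem_insert_of_mem hh))
        obtain ⟨a', ha'1, ha'2⟩ := key n h₀ hn (ht h₀ (Finset.mem_insert_self _ _))
        refine ⟨a * a', ?_, ?_⟩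
        · rw [mul_smul, ha'1, ha1]
        · intro h hh
          rcases Finset.mem_insert.1 hh with rfl | hh
          · rw [mul_smul, ha'2, smul_zero]
          · rw [mul_comm, mul_smul, ha2 h hh, smul_zero]
    -- lemma B : finitely many n's and h's
    have lemB : ∀ tn : Finset M, (∀ n ∈ tn, n ∈ N) → ∀ th : Finset M, (∀ h ∈ th, h ∈ H) →
        ∃ a : A, (∀ n ∈ tn, a • n = n) ∧ ∀ h ∈ th, a • h = 0 := by
      intro tn
      induction tn using Finset.induction_on with
      | empty =>
        intro _ th hth
        obtain ⟨a, _, ha2⟩ := lemA 0 (zero_mem N) th hth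
        exact ⟨a, by simp, ha2⟩
      | @insert n₀ tn' _ ih =>
        intro htn th hth
        obtain ⟨a, ha1, ha2⟩ := ih (fun n hn => htn n (Finset.mem_insert_of_mem hn)) th hth
        obtain ⟨a', ha'1, ha'2⟩ :=
          lemA n₀ (htn n₀ (Finset.mem_insert_self _ _)) th hth
        refine ⟨a + a' - a * a', ?_, ?_⟩
        · intro n hn
          rcases Finset.mem_insert.1 hn with rfl | hn
          · rw [sub_smul, add_smul, ha'1, mul_smul, ha'1]
            abel
          · rw [sub_smul, add_smul, ha1 n hn, mul_comm, mul_smul, ha1 n hn]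
            abel
        · intro h hh
          rw [sub_smul, add_smul, ha2 h hh, ha'2 h hh, mul_smul, ha'2 h hh]
          simp
    -- closure property
    have hclos : ∀ s : Finset M, ∃ a : A, ∀ m ∈ s, e m = a • m := by
      intro s
      obtain ⟨a, ha1, ha2⟩ := lemB (s.image (fun m => e m)) (by
          intro n hn; obtain ⟨m, _, rfl⟩ := Finset.mem_image.1 hn; exact heN m)
        (s.image (fun m => m - e m)) (by
          intro h hh; obtain ⟨m, _, rfl⟩ := Finset.mem_image.1 hh; exact hsub m)
      refine ⟨a, fun m hm => ?_⟩
      have h1 : a • e m = e m := ha1 _ (Finset.mem_image_of_mem _ hm)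
      have h2 : a • (m - e m) = 0 := ha2 _ (Finset.mem_image_of_mem _ hm)
      have h3 : a • m = a • e m + a • (m - e m) := by rw [smul_sub]; abel
      rw [h3, h1, h2, add_zero]
    refine ⟨e, ?_, ?_, ?_, hclos⟩
    · ext m
      exact heL (e m) (heN m)
    · apply le_antisymm
      · rintro x ⟨m, rfl⟩; exact heN m
      · intro x hx
        exact ⟨x, heL x hx⟩
    · intro f
      ext m
      obtain ⟨a, ha⟩ := hclos {m, f m}
      have h1 : e m = a • m := ha m (by simp)
      have h2 : e (f m) = a • f m := ha (f m) (by simp)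
      simp only [LinearMap.comp_apply]
      rw [h2, ← map_smul, ← h1]
  · rintro ⟨e, hidem, hrange, _hcent, hclos⟩
    have hidem' : ∀ m, e (e m) = e m := fun m => congrArg (· m) hidem
    have heN : ∀ x ∈ N, e x = x := by
      intro x hx
      rw [← hrange] at hx
      obtain ⟨y, rfl⟩ := hx
      exact hidem' y
    have hsingle : ∀ m : M, ∃ a : A, e m = a • m := by
      intro m
      obtain ⟨a, ha⟩ := hclos {m}
      exact ⟨a, ha m (by simp)⟩
    refine ⟨?_, LinearMap.ker e, ?_, ?_⟩
    · intro Y₁ Y₂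
      apply le_antisymm
      · exact le_inf (sup_le_sup_left inf_le_left N) (sup_le_sup_left inf_le_right N)
      · intro x hx
        obtain ⟨n₁, hn₁, y₁, hy₁, h1⟩ := Submodule.mem_sup.1 hx.1
        obtain ⟨n₂, hn₂, y₂, hy₂, h2⟩ := Submodule.mem_sup.1 hx.2
        have hxe : ∀ (n y : M), n ∈ N → (Y : Submodule A M) → y ∈ Y → n + y = x →
            x - e x ∈ Y := by
          intro n y hn Y hy hxy
          obtain ⟨a, ha⟩ := hsingle y
          have : x - e x = y - a • y := by
            rw [← hxy, map_add, heN n hn, ← ha]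
            abel
          rw [this]
          exact sub_mem hy (Submodule.smul_mem _ _ hy)
        have hY₁ : x - e x ∈ Y₁ := hxe n₁ y₁ hn₁ Y₁ hy₁ h1
        have hY₂ : x - e x ∈ Y₂ := hxe n₂ y₂ hn₂ Y₂ hy₂ h2
        refine Submodule.mem_sup.2 ⟨e x, ?_, x - e x, ⟨hY₁, hY₂⟩, by abel⟩
        rw [← hrange]; exact ⟨x, rfl⟩
    · rw [eq_bot_iff]
      rintro x ⟨hx1, hx2⟩
      have h8 := heN x hx1
      have hx2' : e x = 0 := hx2
      rw [hx2'] at h8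
      simpa using h8.symm
    · rw [eq_top_iff]
      intro m _
      refine Submodule.mem_sup.2 ⟨e m, ?_, m - e m, ?_, by abel⟩
      · rw [← hrange]; exact ⟨m, rfl⟩
      · rw [LinearMap.mem_ker, map_sub, hidem', sub_self]
end

section
/- Let A be a commutative ring and M a finitely generated A-module. (1) If N is a complemented distributive submodule of M with associated idempotent endomorphism e (e ∘ e = e, range(e) = N, ker(e) a complement of N), then there exists a ∈ A such that e(m) = a • m for all m ∈ M; in particular the class of a in A/Ann(M) is idempotent. (2) Conversely, if a ∈ A satisfies a² - a ∈ Ann(M) and a ∉ Ann(M), then a • M is a nonzero complemented distributive submodule of M (with complement (1-a) • M). -/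
section Aux

variable {A M : Type*} [CommRing A] [AddCommGroup M] [Module A M]

lemma idem_apply (e : M →ₗ[A] M) (he : e ∘ₗ e = e) (m : M) : e (e m) = e m := by
  have := DFunLike.congr_fun he m
  simpa using this

lemma idem_inf (e : M →ₗ[A] M) (he : e ∘ₗ e = e) :
    LinearMap.range e ⊓ LinearMap.ker e = ⊥ := by
  rw [eq_bot_iff]
  rintro x ⟨⟨y, rfl⟩, hx⟩
  have h1 : e (e y) = 0 := hx
  rw [idem_apply e he] at h1
  simp [h1]

lemma idem_sup (e : M →ₗ[A] M) (he : e ∘ₗ e = e) :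
    LinearMap.range e ⊔ LinearMap.ker e = ⊤ := by
  rw [eq_top_iff]
  intro m _
  have h1 : e m ∈ LinearMap.range e := ⟨m, rfl⟩
  have h2 : m - e m ∈ LinearMap.ker e := by
    simp [LinearMap.mem_ker, map_sub, idem_apply e he]
  have := Submodule.add_mem _ (Submodule.mem_sup_left h1) (Submodule.mem_sup_right h2)
  simpa using this

lemma pair_lemma (e : M →ₗ[A] M) (he : e ∘ₗ e = e)
    (hdist : IsDistribSubmodule (LinearMap.range e))
    (n h : M) (hn : e n = n) (hh : e h = 0) :
    ∃ a : A, a • n = n ∧ a • h = 0 := by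
  set m := n + h with hm
  have hd := hdist (Submodule.span A {m}) (LinearMap.ker e)
  rw [idem_sup e he, inf_top_eq] at hd
  have hhmem : h ∈ LinearMap.range e ⊔ Submodule.span A {m} := by
    have hxx : h = m - n := by rw [hm]; abel
    rw [hxx]
    exact Submodule.sub_mem _
      (Submodule.mem_sup_right (Submodule.mem_span_singleton_self m))
      (Submodule.mem_sup_left ⟨n, hn⟩)
  rw [← hd] at hhmem
  obtain ⟨n', hn', z, hz, hsum⟩ := Submodule.mem_sup.mp hhmem
  obtain ⟨c, hc⟩ := Submodule.mem_span_singleton.mp hz.1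
  have hez : e z = 0 := hz.2
  have hem : e m = n := by rw [hm, map_add, hn, hh, add_zero]
  have hcn : c • n = 0 := by
    have h1 : e (c • m) = 0 := by rw [hc]; exact hez
    rwa [map_smul, hem] at h1
  have hzch : z = c • h := by
    rw [← hc, hm, smul_add, hcn, zero_add]
  have hn'0 : n' = 0 := by
    have h1 : n' ∈ LinearMap.ker e := by
      have hxx : n' = h - z := by rw [← hsum]; abel
      rw [hxx]
      simp [LinearMap.mem_ker, map_sub, hh, hez]
    have h2 : n' ∈ LinearMap.range e ⊓ LinearMap.ker e := ⟨hn', h1⟩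
    rwa [idem_inf e he, Submodule.mem_bot] at h2
  have hch : c • h = h := by
    rw [← hzch, ← hsum, hn'0, zero_add]
  exact ⟨1 - c, by rw [sub_smul, one_smul, hcn, sub_zero],
    by rw [sub_smul, one_smul, hch, sub_self]⟩

lemma prod_fix_lemma (g : M → A) (u : Finset M) (x : M)
    (hg : ∀ m ∈ u, g m • x = 0) : (∏ m ∈ u, (1 - g m)) • x = x := by
  classical
  induction u using Finset.induction_on with
  | empty => simp
  | @insert y v hy ih =>
    rw [Finset.prod_insert hy, mul_smul, ih (fun m hm => hg m (Finset.mem_insert_of_mem hm)),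
      sub_smul, one_smul, hg y (Finset.mem_insert_self _ _), sub_zero]

lemma finset_kill (e : M →ₗ[A] M) (he : e ∘ₗ e = e)
    (hdist : IsDistribSubmodule (LinearMap.range e))
    (n : M) (hn : e n = n) (t : Finset M) (ht : ∀ h ∈ t, e h = 0) :
    ∃ a : A, a • n = n ∧ ∀ h ∈ t, a • h = 0 := by
  classical
  induction t using Finset.induction_on with
  | empty => exact ⟨1, one_smul _ _, by simp⟩
  | @insert x t hx ih =>
    obtain ⟨a, han, hat⟩ := ih (fun h hh => ht h (Finset.mem_insert_of_mem hh))
    have hax : e (a • x) = 0 := by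
      rw [map_smul, ht x (Finset.mem_insert_self _ _), smul_zero]
    obtain ⟨b, hbn, hbh⟩ := pair_lemma e he hdist n (a • x) hn hax
    refine ⟨a * b, by rw [mul_smul, hbn, han], ?_⟩
    intro h hh
    rcases Finset.mem_insert.mp hh with rfl | hh
    · rw [mul_comm, mul_smul, hbh]
    · rw [mul_comm, mul_smul, hat h hh, smul_zero]
end Aux

/-- For a finitely generated module `M` over a commutative ring `A`: every complemented
distributive submodule comes from an idempotent of `A/Ann(M)` acting by multiplication, and
conversely every nonzero idempotent of `A/Ann(M)` yields a nonzero complemented distributive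
submodule `aM ⊆ M`. -/
theorem complemented_distrib_of_finite_iff_idempotent {A M : Type*} [CommRing A]
    [AddCommGroup M] [Module A M] [Module.Finite A M] :
    (∀ e : M →ₗ[A] M, e ∘ₗ e = e → ∀ N : Submodule A M, LinearMap.range e = N →
      IsDistribSubmodule N →
      ∃ a : A, (∀ m : M, e m = a • m) ∧ a * a - a ∈ Module.annihilator A M) ∧
    (∀ a : A, a * a - a ∈ Module.annihilator A M → a ∉ Module.annihilator A M →
      LinearMap.range (a • (LinearMap.id : M →ₗ[A] M)) ≠ ⊥ ∧
      IsDistribSubmodule (LinearMap.range (a • (LinearMap.id : M →ₗ[A] M))) ∧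
      LinearMap.range (a • (LinearMap.id : M →ₗ[A] M)) ⊓
        LinearMap.range ((1 - a) • (LinearMap.id : M →ₗ[A] M)) = ⊥ ∧
      LinearMap.range (a • (LinearMap.id : M →ₗ[A] M)) ⊔
        LinearMap.range ((1 - a) • (LinearMap.id : M →ₗ[A] M)) = ⊤) := by
  classical
  constructor
  · rintro e he N rfl hdist
    obtain ⟨s, hs⟩ : (⊤ : Submodule A M).FG := Module.Finite.fg_top
    -- set of kernel elements to kill
    set t : Finset M := s.image (fun x => x - e x) with htdef
    have htker : ∀ h ∈ t, e h = 0 := by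
      intro h hh
      obtain ⟨x, _, rfl⟩ := Finset.mem_image.mp hh
      simp [map_sub, idem_apply e he]
    have key : ∀ m : M, ∃ a : A, a • (e m) = e m ∧ ∀ h ∈ t, a • h = 0 :=
      fun m => finset_kill e he hdist (e m) (idem_apply e he m) t htker
    choose f hf1 hf2 using key
    set a : A := 1 - ∏ m ∈ s, (1 - f m) with hadef
    have hprod_id : ∀ x ∈ t, (∏ m ∈ s, (1 - f m)) • x = x := fun x hx =>
      prod_fix_lemma f s x (fun m _ => hf2 m x hx)
    have hprod_kill : ∀ m₀ ∈ s, (∏ m ∈ s, (1 - f m)) • (e m₀) = 0 := by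
      intro m₀ hm₀
      rw [← Finset.mul_prod_erase s _ hm₀, mul_comm, mul_smul, sub_smul, one_smul,
        hf1 m₀, sub_self, smul_zero]
    have hgen : ∀ m₀ ∈ s, e m₀ = a • m₀ := by
      intro m₀ hm₀
      have hmem_t : m₀ - e m₀ ∈ t := Finset.mem_image_of_mem _ hm₀
      have hsplit : (∏ m ∈ s, (1 - f m)) • m₀ = m₀ - e m₀ := by
        have : m₀ = e m₀ + (m₀ - e m₀) := by abel
        calc (∏ m ∈ s, (1 - f m)) • m₀
            = (∏ m ∈ s, (1 - f m)) • (e m₀) + (∏ m ∈ s, (1 - f m)) • (m₀ - e m₀) := by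
              rw [← smul_add, ← this]
          _ = m₀ - e m₀ := by rw [hprod_kill m₀ hm₀, hprod_id _ hmem_t, zero_add]
      rw [hadef, sub_smul, one_smul, hsplit]
      abel
    have hall : ∀ m : M, e m = a • m := by
      have : e = a • (LinearMap.id : M →ₗ[A] M) := by
        apply LinearMap.ext_on hs
        intro x hx
        simpa using hgen x hx
      intro m
      rw [this]
      simp
    refine ⟨a, hall, ?_⟩
    rw [Module.mem_annihilator]
    intro m
    have h1 : a • (e m) = e m := by
      rw [← hall (e m), idem_apply e he]
    rw [sub_smul, mul_smul, ← hall m, h1, sub_self]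
  · intro a ha hna
    have haa : ∀ m : M, a • a • m = a • m := by
      intro m
      have := Module.mem_annihilator.mp ha m
      rw [sub_smul, mul_smul, sub_eq_zero] at this
      exact this
    have hmem : ∀ x : M, x ∈ LinearMap.range (a • (LinearMap.id : M →ₗ[A] M)) ↔
        ∃ m : M, a • m = x := by
      intro x
      simp [LinearMap.mem_range]
    have hmem' : ∀ x : M, x ∈ LinearMap.range ((1 - a) • (LinearMap.id : M →ₗ[A] M)) ↔
        ∃ m : M, (1 - a) • m = x := by
      intro x
      simp [LinearMap.mem_range]
    refine ⟨?_, ?_, ?_, ?_⟩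
    · intro hbot
      apply hna
      rw [Module.mem_annihilator]
      intro m
      have : a • m ∈ LinearMap.range (a • (LinearMap.id : M →ₗ[A] M)) := (hmem _).mpr ⟨m, rfl⟩
      rw [hbot, Submodule.mem_bot] at this
      exact this
    · intro Y₁ Y₂
      apply le_antisymm
      · exact le_inf (sup_le_sup_left inf_le_left _) (sup_le_sup_left inf_le_right _)
      · rintro x ⟨hx1, hx2⟩
        obtain ⟨u, hu, y₁, hy₁, hsum₁⟩ := Submodule.mem_sup.mp hx1
        obtain ⟨v, hv, y₂, hy₂, hsum₂⟩ := Submodule.mem_sup.mp hx2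
        obtain ⟨u', hu'⟩ := (hmem u).mp hu
        obtain ⟨v', hv'⟩ := (hmem v).mp hv
        have hkey₁ : x - a • x = y₁ - a • y₁ := by
          rw [← hsum₁, ← hu', smul_add, haa]
          abel
        have hkey₂ : x - a • x = y₂ - a • y₂ := by
          rw [← hsum₂, ← hv', smul_add, haa]
          abel
        have hx12 : x - a • x ∈ Y₁ ⊓ Y₂ := by
          constructor
          · rw [hkey₁]; exact Submodule.sub_mem _ hy₁ (Submodule.smul_mem _ _ hy₁)
          · rw [hkey₂]; exact Submodule.sub_mem _ hy₂ (Submodule.smul_mem _ _ hy₂)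
        have : x = a • x + (x - a • x) := by abel
        rw [this]
        exact Submodule.add_mem _ (Submodule.mem_sup_left ((hmem _).mpr ⟨x, rfl⟩))
          (Submodule.mem_sup_right hx12)
    · rw [eq_bot_iff]
      intro x hx
      obtain ⟨u, hu⟩ := (hmem x).mp hx.1
      obtain ⟨v, hv⟩ := (hmem' x).mp hx.2
      have h1 : a • x = x := by rw [← hu, haa]
      have h2 : a • x = 0 := by
        have hz := Module.mem_annihilator.mp ha v
        rw [← hv, smul_smul, mul_sub, mul_one, ← neg_sub (a * a) a, neg_smul, hz, neg_zero]
      rw [Submodule.mem_bot, ← h1, h2]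
    · rw [eq_top_iff]
      intro m _
      have : m = a • m + (1 - a) • m := by
        rw [sub_smul, one_smul]; abel
      rw [this]
      exact Submodule.add_mem _ (Submodule.mem_sup_left ((hmem _).mpr ⟨m, rfl⟩))
        (Submodule.mem_sup_right ((hmem' _).mpr ⟨m, rfl⟩))
end

section
/- Let R be a ring, M a right R-module, N a submodule of M, and ι a nonempty index set. Let M^(ι) denote the direct sum of ι copies of M (finitely supported functions ι →₀ M with pointwise structure) and let N^(ι) be the submodule {f ∈ M^(ι) | f(i) ∈ N for all i ∈ ι}. Then N is a complemented distributive submodule of M if and only if N^(ι) is a complemented distributive submodule of M^(ι). -/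
/-- `N` is a complemented distributive submodule of a module `M`. -/
def IsComplDistribSubmodule {R M : Type*} [Ring R] [AddCommGroup M] [Module R M]
    (N : Submodule R M) : Prop :=
  IsDistribSubmodule N ∧ ∃ H : Submodule R M, N ⊓ H = ⊥ ∧ N ⊔ H = ⊤

open Submodule

section Aux

variable {R M : Type*} [Ring R] [AddCommGroup M] [Module R M]

/-- From distributivity plus a codisjoint `H`, every element decomposes by a scalar. -/
lemma aux_decomp {N H : Submodule R M} (hd : IsDistribSubmodule N) (hcod : N ⊔ H = ⊤)
    (m : M) : ∃ a : R, a • m ∈ N ∧ m - a • m ∈ H := by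
  have h1 : m ∈ N ⊔ (span R {m} ⊓ H) := by
    rw [hd (span R {m}) H, hcod, inf_top_eq]
    exact mem_sup_right (mem_span_singleton_self m)
  rcases mem_sup.mp h1 with ⟨y, hy, z, hz, hyz⟩
  rcases mem_inf.mp hz with ⟨hz1, hz2⟩
  rcases mem_span_singleton.mp hz1 with ⟨c, hc⟩
  refine ⟨1 - c, ?_, ?_⟩
  · have h2 : (1 - c) • m = y := by
      rw [sub_smul, one_smul, hc]
      rw [← hyz]; abel
    rw [h2]; exact hy
  · have h2 : m - (1 - c) • m = z := by
      rw [sub_smul, one_smul, hc]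
      abel
    rw [h2]; exact hz2

lemma aux_pair {N H : Submodule R M} (hdisj : N ⊓ H = ⊥)
    (hdec : ∀ m : M, ∃ a : R, a • m ∈ N ∧ m - a • m ∈ H) :
    ∀ n ∈ N, ∀ h ∈ H, ∃ a : R, a • n = n ∧ a • h = 0 := by
  intro n hn h hh
  obtain ⟨a, h1, h2⟩ := hdec (n + h)
  have hah : a • h ∈ N := by
    have he : a • h = a • (n + h) - a • n := by rw [smul_add]; abel
    rw [he]; exact N.sub_mem h1 (N.smul_mem a hn)
  have hah0 : a • h = 0 := by
    have hm : a • h ∈ N ⊓ H := mem_inf.mpr ⟨hah, H.smul_mem a hh⟩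
    rw [hdisj, mem_bot] at hm; exact hm
  have hna : n - a • n ∈ H := by
    have he : n - a • n = ((n + h) - a • (n + h)) - h + a • h := by rw [smul_add]; abel
    rw [he, hah0, add_zero]
    exact H.sub_mem h2 hh
  have hz : n - a • n = 0 := by
    have hm : n - a • n ∈ N ⊓ H :=
      mem_inf.mpr ⟨N.sub_mem hn (N.smul_mem a hn), hna⟩
    rw [hdisj, mem_bot] at hm; exact hm
  exact ⟨a, (sub_eq_zero.mp hz).symm, hah0⟩

/-- Kill finitely many elements of `H` while fixing one element of `N`. -/
lemma aux_kill {N H : Submodule R M}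
    (hpair : ∀ n ∈ N, ∀ h ∈ H, ∃ a : R, a • n = n ∧ a • h = 0)
    {ι' : Type*} (s : Finset ι') (h : ι' → M) (hh : ∀ i ∈ s, h i ∈ H)
    {n : M} (hn : n ∈ N) :
    ∃ a : R, a • n = n ∧ ∀ i ∈ s, a • h i = 0 := by
  classical
  induction s using Finset.induction_on with
  | empty =>
    obtain ⟨a, ha, _⟩ := hpair n hn 0 H.zero_mem
    exact ⟨a, ha, by simp⟩
  | @insert j s hj ih =>
    obtain ⟨a₁, ha₁n, ha₁⟩ := ih (fun i hi => hh i (Finset.mem_insert_of_mem hi))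
    obtain ⟨b, hbn, hb⟩ :=
      hpair n hn (a₁ • h j) (H.smul_mem _ (hh j (Finset.mem_insert_self j s)))
    refine ⟨b * a₁, by rw [mul_smul, ha₁n, hbn], ?_⟩
    intro i hi
    rcases Finset.mem_insert.mp hi with rfl | hi
    · rw [mul_smul]; exact hb
    · rw [mul_smul, ha₁ i hi, smul_zero]

/-- Uniform scalar for finitely many pairs: fix finitely many elements of `N`
and kill finitely many elements of `H`. -/
lemma aux_multi {N H : Submodule R M}
    (hpair : ∀ n ∈ N, ∀ h ∈ H, ∃ a : R, a • n = n ∧ a • h = 0)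
    {ι' : Type*} (s t : Finset ι') (n h : ι' → M)
    (hn : ∀ i ∈ s, n i ∈ N) (hh : ∀ i ∈ t, h i ∈ H) :
    ∃ a : R, (∀ i ∈ s, a • n i = n i) ∧ (∀ i ∈ t, a • h i = 0) := by
  classical
  induction s using Finset.induction_on with
  | empty =>
    obtain ⟨a, _, ha⟩ := aux_kill hpair t h hh N.zero_mem
    exact ⟨a, by simp, ha⟩
  | @insert j s hj ih =>
    obtain ⟨a₁, ha₁n, ha₁h⟩ := ih (fun i hi => hn i (Finset.mem_insert_of_mem hi))
    have hnj : n j ∈ N := hn j (Finset.mem_insert_self j s)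
    have hnj' : n j - a₁ • n j ∈ N := N.sub_mem hnj (N.smul_mem _ hnj)
    obtain ⟨c, hcn, hch⟩ := aux_kill hpair t h hh hnj'
    refine ⟨a₁ + c - c * a₁, ?_, ?_⟩
    · intro i hi
      rcases Finset.mem_insert.mp hi with rfl | hi
      · have hc' : c • n i - c • (a₁ • n i) = n i - a₁ • n i := by
          rw [← smul_sub]; exact hcn
        rw [sub_smul, add_smul, mul_smul]
        calc a₁ • n i + c • n i - c • (a₁ • n i)
            = a₁ • n i + (c • n i - c • (a₁ • n i)) := by abel
          _ = a₁ • n i + (n i - a₁ • n i) := by rw [hc']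
          _ = n i := by abel
      · rw [sub_smul, add_smul, mul_smul, ha₁n i hi]
        abel
    · intro i hi
      rw [sub_smul, add_smul, mul_smul, ha₁h i hi, hch i hi, smul_zero]
      abel

end Aux

/-- `N ⊆ M` is a complemented distributive submodule iff `N^(ι) ⊆ M^(ι)` is a complemented
distributive submodule of the direct sum of `ι` copies of `M`. -/
theorem isComplDistribSubmodule_finsupp_iff {R M : Type*} [Ring R] [AddCommGroup M]
    [Module Rᵐᵒᵖ M] (N : Submodule Rᵐᵒᵖ M) (ι : Type*) [Nonempty ι] :
    IsComplDistribSubmodule N ↔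
      IsComplDistribSubmodule
        (⨅ i : ι, Submodule.comap (Finsupp.lapply (M := M) (R := Rᵐᵒᵖ) i) N) := by
  classical
  set N' : Submodule Rᵐᵒᵖ (ι →₀ M) :=
    ⨅ i : ι, Submodule.comap (Finsupp.lapply (M := M) (R := Rᵐᵒᵖ) i) N with hN'
  have memN' : ∀ f : ι →₀ M, f ∈ N' ↔ ∀ i, f i ∈ N := by
    intro f
    simp [hN', Submodule.mem_iInf, Finsupp.lapply_apply]
  constructor
  · rintro ⟨hd, H, hdisj, hcod⟩
    have hdec := aux_decomp hd hcod
    have hpair := aux_pair hdisj hdec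
    set H' : Submodule Rᵐᵒᵖ (ι →₀ M) :=
      ⨅ i : ι, Submodule.comap (Finsupp.lapply (M := M) (R := Rᵐᵒᵖ) i) H with hH'
    have memH' : ∀ f : ι →₀ M, f ∈ H' ↔ ∀ i, f i ∈ H := by
      intro f
      simp [hH', Submodule.mem_iInf, Finsupp.lapply_apply]
    -- decomposition for finsupps
    have hdecF : ∀ f : ι →₀ M, ∃ a : Rᵐᵒᵖ, a • f ∈ N' ∧ f - a • f ∈ H' := by
      intro f
      choose g hg1 hg2 using hdec
      obtain ⟨a, han, hah⟩ := aux_multi hpair f.support f.support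
        (fun i => g (f i) • f i) (fun i => f i - g (f i) • f i)
        (fun i _ => hg1 (f i)) (fun i _ => hg2 (f i))
      refine ⟨a, ?_, ?_⟩
      · rw [memN']
        intro i
        rw [Finsupp.smul_apply]
        by_cases hi : i ∈ f.support
        · have : a • f i = g (f i) • f i := by
            have h1 := han i hi
            have h2 := hah i hi
            have : a • f i = a • (g (f i) • f i) + a • (f i - g (f i) • f i) := by
              rw [← smul_add]; congr 1; abel
            rw [this, h1, h2, add_zero]
          rw [this]; exact hg1 (f i)
        · rw [Finsupp.notMem_support_iff.mp hi, smul_zero]; exact N.zero_mem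
      · rw [memH']
        intro i
        rw [Finsupp.sub_apply, Finsupp.smul_apply]
        by_cases hi : i ∈ f.support
        · have : a • f i = g (f i) • f i := by
            have h1 := han i hi
            have h2 := hah i hi
            have : a • f i = a • (g (f i) • f i) + a • (f i - g (f i) • f i) := by
              rw [← smul_add]; congr 1; abel
            rw [this, h1, h2, add_zero]
          rw [this]; exact hg2 (f i)
        · rw [Finsupp.notMem_support_iff.mp hi, smul_zero, sub_zero]; exact H.zero_mem
    -- absorption
    have habs : ∀ (Y : Submodule Rᵐᵒᵖ (ι →₀ M)) (w u v : ι →₀ M),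
        w ∈ H' → u ∈ N' → v ∈ Y → w = u + v → w ∈ Y := by
      intro Y w u v hw hu hv hwv
      obtain ⟨a, han, hah⟩ := aux_multi hpair (u.support ∪ w.support) (u.support ∪ w.support)
        (fun i => u i) (fun i => w i)
        (fun i _ => (memN' u).mp hu i) (fun i _ => (memH' w).mp hw i)
      have hau : a • u = u := by
        ext i
        rw [Finsupp.smul_apply]
        by_cases hi : i ∈ u.support
        · exact han i (Finset.mem_union_left _ hi)
        · rw [Finsupp.notMem_support_iff.mp hi, smul_zero]
      have haw : a • w = 0 := by
        ext i
        rw [Finsupp.smul_apply, Finsupp.coe_zero, Pi.zero_apply]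
        by_cases hi : i ∈ w.support
        · exact hah i (Finset.mem_union_right _ hi)
        · rw [Finsupp.notMem_support_iff.mp hi, smul_zero]
      have hu' : u = -(a • v) := by
        have h0 : u + a • v = 0 := by
          rw [← hau, ← smul_add, ← hwv, haw]
        exact eq_neg_of_add_eq_zero_left h0
      have : u ∈ Y := by rw [hu']; exact Y.neg_mem (Y.smul_mem a hv)
      rw [hwv]; exact Y.add_mem this hv
    refine ⟨?_, H', ?_, ?_⟩
    · -- distributivity of N'
      intro Y₁ Y₂
      apply le_antisymm
      · exact le_inf (sup_le_sup_left inf_le_left N') (sup_le_sup_left inf_le_right N')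
      · intro z hz
        obtain ⟨hz1, hz2⟩ := Submodule.mem_inf.mp hz
        obtain ⟨a, haN, haH⟩ := hdecF z
        have hhY : ∀ Y : Submodule Rᵐᵒᵖ (ι →₀ M), z ∈ N' ⊔ Y → z - a • z ∈ Y := by
          intro Y hzY
          obtain ⟨u, hu, v, hv, huv⟩ := Submodule.mem_sup.mp hzY
          refine habs Y (z - a • z) (u - a • z) v haH (N'.sub_mem hu haN) hv ?_
          rw [← huv]; abel
        refine Submodule.mem_sup.mpr ⟨a • z, haN, z - a • z,
          Submodule.mem_inf.mpr ⟨hhY Y₁ hz1, hhY Y₂ hz2⟩, by abel⟩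
    · -- disjoint
      apply le_bot_iff.mp
      intro f hf
      obtain ⟨hf1, hf2⟩ := Submodule.mem_inf.mp hf
      rw [Submodule.mem_bot]
      ext i
      have : f i ∈ N ⊓ H := Submodule.mem_inf.mpr ⟨(memN' f).mp hf1 i, (memH' f).mp hf2 i⟩
      rw [hdisj, Submodule.mem_bot] at this
      simp [this]
    · -- codisjoint
      apply top_le_iff.mp
      intro f _
      obtain ⟨a, haN, haH⟩ := hdecF f
      have : f = a • f + (f - a • f) := by abel
      exact this ▸ Submodule.add_mem_sup haN haH
  · rintro ⟨hd', H', hdisj', hcod'⟩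
    have hdec' := aux_decomp hd' hcod'
    obtain ⟨i₀⟩ := ‹Nonempty ι›
    have hsingleN : ∀ {n : M}, n ∈ N → Finsupp.single i₀ n ∈ N' := by
      intro n hn
      rw [memN']
      intro i
      rw [Finsupp.single_apply]
      split_ifs with h
      · exact hn
      · exact N.zero_mem
    refine ⟨?_, Submodule.comap (Finsupp.lsingle i₀) H', ?_, ?_⟩
    · -- distributivity of N
      intro Y₁ Y₂
      apply le_antisymm
      · exact le_inf (sup_le_sup_left inf_le_left N) (sup_le_sup_left inf_le_right N)
      · intro m hm
        obtain ⟨hm1, hm2⟩ := Submodule.mem_inf.mp hm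
        have hlift : ∀ Y : Submodule Rᵐᵒᵖ M, m ∈ N ⊔ Y →
            Finsupp.single i₀ m ∈ N' ⊔ Submodule.map (Finsupp.lsingle (R := Rᵐᵒᵖ) i₀) Y := by
          intro Y hY
          obtain ⟨n, hn, y, hy, hny⟩ := Submodule.mem_sup.mp hY
          refine Submodule.mem_sup.mpr ⟨Finsupp.single i₀ n, hsingleN hn,
            Finsupp.single i₀ y, Submodule.mem_map.mpr ⟨y, hy, rfl⟩, ?_⟩
          rw [← Finsupp.single_add, hny]
        have h1 : Finsupp.single i₀ m ∈
            N' ⊔ (Submodule.map (Finsupp.lsingle (R := Rᵐᵒᵖ) i₀) Y₁ ⊓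
              Submodule.map (Finsupp.lsingle (R := Rᵐᵒᵖ) i₀) Y₂) := by
          rw [hd']
          exact Submodule.mem_inf.mpr ⟨hlift Y₁ hm1, hlift Y₂ hm2⟩
        obtain ⟨g, hg, w, hw, hgw⟩ := Submodule.mem_sup.mp h1
        obtain ⟨hw1, hw2⟩ := Submodule.mem_inf.mp hw
        obtain ⟨y₁, hy₁, hwy₁⟩ := Submodule.mem_map.mp hw1
        obtain ⟨y₂, hy₂, hwy₂⟩ := Submodule.mem_map.mp hw2
        have hmval : m = g i₀ + w i₀ := by
          have := congrArg (fun f : ι →₀ M => f i₀) hgw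
          simpa [Finsupp.single_eq_same] using this.symm
        have hwY₁ : w i₀ ∈ Y₁ := by
          rw [← hwy₁]; simpa [Finsupp.single_eq_same] using hy₁
        have hwY₂ : w i₀ ∈ Y₂ := by
          rw [← hwy₂]; simpa [Finsupp.single_eq_same] using hy₂
        exact hmval ▸ Submodule.add_mem_sup ((memN' g).mp hg i₀)
          (Submodule.mem_inf.mpr ⟨hwY₁, hwY₂⟩)
    · -- disjoint
      apply le_bot_iff.mp
      intro m hm
      obtain ⟨hm1, hm2⟩ := Submodule.mem_inf.mp hm
      have : Finsupp.single i₀ m ∈ N' ⊓ H' :=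
        Submodule.mem_inf.mpr ⟨hsingleN hm1, hm2⟩
      rw [hdisj', Submodule.mem_bot] at this
      rw [Submodule.mem_bot]
      have := congrArg (fun f : ι →₀ M => f i₀) this
      simpa [Finsupp.single_eq_same] using this
    · -- codisjoint
      apply top_le_iff.mp
      intro m _
      obtain ⟨a, haN, haH⟩ := hdec' (Finsupp.single i₀ m)
      have h1 : a • m ∈ N := by
        have := (memN' _).mp haN i₀
        simpa [Finsupp.single_eq_same] using this
      have h2 : m - a • m ∈ Submodule.comap (Finsupp.lsingle (R := Rᵐᵒᵖ) i₀) H' := by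
        rw [Submodule.mem_comap]
        have he : (Finsupp.lsingle (R := Rᵐᵒᵖ) i₀) (m - a • m)
            = Finsupp.single i₀ m - a • Finsupp.single i₀ m := by
          simp [Finsupp.single_sub, Finsupp.smul_single]
        rw [he]; exact haH
      have : m = a • m + (m - a • m) := by abel
      exact this ▸ Submodule.add_mem_sup h1 h2
end
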